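/- arXiv:1702.08264 — 3 statements merged into one kernel-verified Lean document; each statement's English description precedes it below -/
import Mathlib

section
/- Let Ψ be a finite reduced root system in a finite-dimensional real inner product space, let ψ₁′, ψ₂′ ∈ Ψ be linearly independent, and suppose that {ψ₁′, ψ₂′} is a base of the root subsystem Ψ′ := Ψ ∩ (ℝψ₁′ + ℝψ₂′). Then there exists a base Σ′ of Ψ with {ψ₁′, ψ₂′} ⊆ Σ′. -/
open RealInnerProductSpace

variable {V : Type*} [NormedAddCommGroup V] [InnerProductSpace ℝ V]

/-- The pairing `⟨x | v∨⟩ = 2(x,v)/(v,v)` of a vector against the "coroot" of `v`. -/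
noncomputable def pairR (x v : V) : ℝ := 2 * ⟪x, v⟫ / ⟪v, v⟫

/-- The reflection `s_v(x) = x - ⟨x|v∨⟩ v` in the nonzero vector `v`. -/
noncomputable def reflV (v x : V) : V := x - pairR x v • v

/-- A finite reduced crystallographic root system in a real inner product space:
a finite set of nonzero vectors, closed under all of its reflections, with integral
Cartan numbers, such that the only multiples of a root `α` that are roots are `±α`. -/
def IsRootSystem (Φ : Set V) : Prop :=
  Φ.Finite ∧
  (0 : V) ∉ Φ ∧
  (∀ α ∈ Φ, ∀ β ∈ Φ, reflV α β ∈ Φ) ∧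
  (∀ α ∈ Φ, ∀ β ∈ Φ, ∃ n : ℤ, pairR β α = (n : ℝ)) ∧
  (∀ α ∈ Φ, ∀ c : ℝ, c • α ∈ Φ → c • α = α ∨ c • α = -α)

/-- `S` is a base of `Φ`: a linearly independent subset spanning the span of `Φ`
such that every element of `Φ` is an integral linear combination of `S` with
coefficients all of the same sign. -/
def IsBase (Φ S : Set V) : Prop :=
  S ⊆ Φ ∧
  LinearIndependent ℝ ((↑) : S → V) ∧
  Submodule.span ℝ S = Submodule.span ℝ Φ ∧
  ∀ α ∈ Φ, ∃ c : V →₀ ℤ,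
    (↑c.support : Set V) ⊆ S ∧
    α = c.sum (fun v n => (n : ℝ) • v) ∧
    ((∀ v, 0 ≤ c v) ∨ (∀ v, c v ≤ 0))

/-- The positive elements with respect to a base `S`: nonnegative integral
combinations of `S`. -/
def IsPositive (S : Set V) (α : V) : Prop :=
  ∃ c : V →₀ ℤ,
    (↑c.support : Set V) ⊆ S ∧
    α = c.sum (fun v n => (n : ℝ) • v) ∧
    (∀ v, 0 ≤ c v)

/-- `Ψ` is a root subsystem of `Φ`: a nonempty subset stable under its own reflections. -/
def IsRootSubsystem (Φ Ψ : Set V) : Prop :=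
  Ψ ⊆ Φ ∧ Ψ.Nonempty ∧ ∀ ψ ∈ Ψ, ∀ x ∈ Ψ, reflV ψ x ∈ Ψ

/-- `Ψ` is additively closed in `Φ` : `Ψ = Φ ∩ ℤΨ`. -/
def IsAddClosedIn (Φ Ψ : Set V) : Prop :=
  Ψ = Φ ∩ (Submodule.span ℤ Ψ : Set V)

set_option linter.unusedSectionVars false





lemma pairR_self (v : V) (hv : v ≠ 0) : pairR v v = 2 := by
  have : ⟪v, v⟫ ≠ 0 := by simpa using hv
  rw [pairR, mul_div_assoc, div_self this, mul_one]

lemma rs_ne_zero {Φ : Set V} (hΦ : IsRootSystem Φ) {α : V} (hα : α ∈ Φ) : α ≠ 0 := by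
  rintro rfl; exact hΦ.2.1 hα

lemma rs_neg_mem {Φ : Set V} (hΦ : IsRootSystem Φ) {α : V} (hα : α ∈ Φ) : -α ∈ Φ := by
  have h := hΦ.2.2.1 α hα α hα
  rwa [show reflV α α = -α by
    rw [reflV, pairR_self α (rs_ne_zero hΦ hα), two_smul]; abel] at h

/-- If `α ≠ β` are roots with positive inner product, then `α - β` is a root. -/
lemma rs_sub_mem {Φ : Set V} (hΦ : IsRootSystem Φ) {α β : V} (hα : α ∈ Φ) (hβ : β ∈ Φ)
    (hne : α ≠ β) (hpos : 0 < ⟪α, β⟫) : α - β ∈ Φ := by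
  have hα0 := rs_ne_zero hΦ hα
  have hβ0 := rs_ne_zero hΦ hβ
  have hαα : (0:ℝ) < ⟪α, α⟫ :=
    lt_of_le_of_ne real_inner_self_nonneg (Ne.symm (inner_self_ne_zero.2 hα0))
  have hββ : (0:ℝ) < ⟪β, β⟫ :=
    lt_of_le_of_ne real_inner_self_nonneg (Ne.symm (inner_self_ne_zero.2 hβ0))
  obtain ⟨m, hm⟩ := hΦ.2.2.2.1 β hβ α hα   -- pairR α β = m
  obtain ⟨n, hn⟩ := hΦ.2.2.2.1 α hα β hβ   -- pairR β α = n
  have hmpos : (0:ℝ) < m := by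
    rw [← hm]; unfold pairR; positivity
  have hnpos : (0:ℝ) < n := by
    rw [← hn]; unfold pairR
    rw [real_inner_comm]; positivity
  -- not parallel
  by_cases hpar : ∃ c : ℝ, β = c • α
  · obtain ⟨c, rfl⟩ := hpar
    rcases hΦ.2.2.2.2 α hα c hβ with h | h
    · exact absurd h.symm hne
    · rw [h] at hpos
      rw [inner_neg_right] at hpos
      linarith
  · -- strict Cauchy-Schwarz
    have hlt : ⟪α, β⟫ < ‖α‖ * ‖β‖ := by
      rw [inner_lt_norm_mul_iff_real]
      intro hcon
      have h0 : ‖α‖ ≠ 0 := norm_ne_zero_iff.2 hα0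
      have := congrArg (fun x => (‖α‖)⁻¹ • x) hcon
      simp only [smul_smul, inv_mul_cancel₀ h0, one_smul] at this
      exact hpar ⟨‖α‖⁻¹ * ‖β‖, this.symm⟩
    have hprod : (m:ℝ) * n < 4 := by
      rw [← hm, ← hn]
      unfold pairR
      rw [real_inner_comm α β]
      rw [div_mul_div_comm]
      rw [div_lt_iff₀ (mul_pos hββ hαα)]
      have hc : ⟪β, α⟫ = ⟪α, β⟫ := real_inner_comm α β
      have h1 : ⟪α, β⟫ * ⟪α, β⟫ < (‖α‖*‖β‖) * (‖α‖*‖β‖) := by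
        apply mul_lt_mul' (le_of_lt hlt) hlt (le_of_lt hpos) (mul_pos (norm_pos_iff.2 hα0) (norm_pos_iff.2 hβ0))
      have h2 : (‖α‖*‖β‖) * (‖α‖*‖β‖) = ⟪α,α⟫ * ⟪β,β⟫ := by
        rw [real_inner_self_eq_norm_mul_norm, real_inner_self_eq_norm_mul_norm]; ring
      nlinarith
    have hm1 : 1 ≤ m := by exact_mod_cast hmpos
    have hn1 : 1 ≤ n := by exact_mod_cast hnpos
    have hmn : m * n < 4 := by exact_mod_cast hprod
    have : m = 1 ∨ n = 1 := by
      by_contra hc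
      push_neg at hc
      have : 2 ≤ m := by omega
      have : 2 ≤ n := by omega
      nlinarith
    rcases this with h1 | h1
    · have := hΦ.2.2.1 β hβ α hα
      rwa [show reflV β α = α - β by rw [reflV, hm, h1]; push_cast; rw [one_smul]] at this
    · have := hΦ.2.2.1 α hα β hβ
      have h2 : reflV α β = β - α := by rw [reflV, hn, h1]; push_cast; rw [one_smul]
      rw [h2] at this
      have := rs_neg_mem hΦ this
      rwa [neg_sub] at this



lemma isPositive_single {S : Set V} {α : V} (hα : α ∈ S) : IsPositive S α := by
  classical
  refine ⟨Finsupp.single α 1, ?_, ?_, ?_⟩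
  · intro v hv
    simp only [Finset.coe_subset, Finsupp.support_single_ne_zero α one_ne_zero] at hv
    simp only [Finset.coe_singleton, Set.mem_singleton_iff] at hv
    subst hv; exact hα
  · rw [Finsupp.sum_single_index (by simp)]; simp
  · intro v
    rcases eq_or_ne v α with rfl | h
    · rw [Finsupp.single_eq_same]; norm_num
    · rw [Finsupp.single_eq_of_ne' (Ne.symm h)]

lemma isPositive_add {S : Set V} {α β : V} (hα : IsPositive S α) (hβ : IsPositive S β) :
    IsPositive S (α + β) := by
  classical
  obtain ⟨c, hcs, hcv, hc0⟩ := hα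
  obtain ⟨d, hds, hdv, hd0⟩ := hβ
  refine ⟨c + d, ?_, ?_, fun v => by
    simp only [Finsupp.add_apply]; exact add_nonneg (hc0 v) (hd0 v)⟩
  · intro v hv
    have hv' : v ∈ c.support ∪ d.support :=
      Finsupp.support_add (by exact_mod_cast hv)
    rcases Finset.mem_union.1 hv' with h | h
    exacts [hcs h, hds h]
  · rw [Finsupp.sum_add_index' (by simp) (by intro v m n; push_cast; rw [add_smul])]
    rw [hcv, hdv]

/-- The positive roots with respect to a regular vector `t`. -/
def PosSet (t : V) (Φ : Set V) : Set V := {α ∈ Φ | 0 < ⟪t, α⟫}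

/-- The indecomposable positive roots with respect to `t`. -/
def IndSet (t : V) (Φ : Set V) : Set V :=
  {α ∈ PosSet t Φ | ¬∃ β ∈ PosSet t Φ, ∃ γ ∈ PosSet t Φ, β + γ = α}

lemma posSet_isPositive {Φ : Set V} (hfin : Φ.Finite) (t : V) :
    ∀ α ∈ PosSet t Φ, IsPositive (IndSet t Φ) α := by
  have hfinP : (PosSet t Φ).Finite := hfin.subset (fun x hx => hx.1)
  suffices H : ∀ n : ℕ, ∀ α ∈ PosSet t Φ,
      ({β ∈ PosSet t Φ | ⟪t, β⟫ < ⟪t, α⟫}).ncard ≤ n → IsPositive (IndSet t Φ) α by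
    intro α hα; exact H _ α hα le_rfl
  intro n
  induction n with
  | zero =>
      intro α hα hcard
      by_cases hdec : α ∈ IndSet t Φ
      · exact isPositive_single hdec
      · exfalso
        have hex : ∃ β ∈ PosSet t Φ, ∃ γ ∈ PosSet t Φ, β + γ = α := by
          by_contra hc; exact hdec ⟨hα, hc⟩
        obtain ⟨β, hβ, γ, hγ, hsum⟩ := hex
        have hβlt : ⟪t, β⟫ < ⟪t, α⟫ := by
          have : ⟪t, α⟫ = ⟪t, β⟫ + ⟪t, γ⟫ := by rw [← hsum, inner_add_right]
          linarith [hγ.2]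
        have hmem : β ∈ {x ∈ PosSet t Φ | ⟪t, x⟫ < ⟪t, α⟫} := ⟨hβ, hβlt⟩
        have : 0 < ({x ∈ PosSet t Φ | ⟪t, x⟫ < ⟪t, α⟫}).ncard :=
          (Set.ncard_pos (hfinP.subset (fun x hx => hx.1))).2 ⟨β, hmem⟩
        omega
  | succ n ih =>
      intro α hα hcard
      by_cases hdec : α ∈ IndSet t Φ
      · exact isPositive_single hdec
      · have hex : ∃ β ∈ PosSet t Φ, ∃ γ ∈ PosSet t Φ, β + γ = α := by
          by_contra hc; exact hdec ⟨hα, hc⟩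
        obtain ⟨β, hβ, γ, hγ, hsum⟩ := hex
        have hsplit : ⟪t, α⟫ = ⟪t, β⟫ + ⟪t, γ⟫ := by rw [← hsum, inner_add_right]
        have key : ∀ δ ∈ PosSet t Φ, ⟪t, δ⟫ < ⟪t, α⟫ →
            ({x ∈ PosSet t Φ | ⟪t, x⟫ < ⟪t, δ⟫}).ncard ≤ n := by
          intro δ hδ hδlt
          have hss : {x ∈ PosSet t Φ | ⟪t, x⟫ < ⟪t, δ⟫} ⊂ {x ∈ PosSet t Φ | ⟪t, x⟫ < ⟪t, α⟫} := by
            constructor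
            · intro x hx; exact ⟨hx.1, lt_trans hx.2 hδlt⟩
            · intro hsub
              exact absurd (hsub ⟨hδ, hδlt⟩).2 (lt_irrefl _)
          have := Set.ncard_lt_ncard hss (hfinP.subset (fun x hx => hx.1))
          omega
        have hβlt : ⟪t, β⟫ < ⟪t, α⟫ := by linarith [hγ.2]
        have hγlt : ⟪t, γ⟫ < ⟪t, α⟫ := by linarith [hβ.2]
        have := isPositive_add (ih β hβ (key β hβ hβlt)) (ih γ hγ (key γ hγ hγlt))
        rwa [hsum] at this

lemma indSet_inner_nonpos {Φ : Set V} (hΦ : IsRootSystem Φ) {t : V}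
    (ht : ∀ α ∈ Φ, ⟪t, α⟫ ≠ 0) {α β : V} (hα : α ∈ IndSet t Φ) (hβ : β ∈ IndSet t Φ)
    (hne : α ≠ β) : ⟪α, β⟫ ≤ 0 := by
  by_contra hpos
  push_neg at hpos
  have hsub : α - β ∈ Φ := rs_sub_mem hΦ hα.1.1 hβ.1.1 hne hpos
  rcases lt_or_gt_of_ne (ht _ hsub) with hneg | hgt
  · -- ⟪t, α - β⟫ < 0, so β - α is a positive root and β = (β-α) + α decomposes β
    have hsub' : β - α ∈ Φ := by
      have := rs_neg_mem hΦ hsub; rwa [neg_sub] at this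
    have hpos' : β - α ∈ PosSet t Φ := by
      refine ⟨hsub', ?_⟩
      have h1 : ⟪t, α - β⟫ = ⟪t, α⟫ - ⟪t, β⟫ := inner_sub_right _ _ _
      have h2 : ⟪t, β - α⟫ = ⟪t, β⟫ - ⟪t, α⟫ := inner_sub_right _ _ _
      linarith
    exact hβ.2 ⟨β - α, hpos', α, hα.1, by abel⟩
  · have hpos' : α - β ∈ PosSet t Φ := ⟨hsub, hgt⟩
    exact hα.2 ⟨α - β, hpos', β, hβ.1, by abel⟩

lemma indSet_linearIndependent {Φ : Set V} (hΦ : IsRootSystem Φ) {t : V}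
    (ht : ∀ α ∈ Φ, ⟪t, α⟫ ≠ 0) :
    LinearIndependent ℝ ((↑) : (IndSet t Φ) → V) := by
  classical
  rw [linearIndependent_subtype_iff, linearIndepOn_iff]
  intro l hl hl0
  rw [Finsupp.mem_supported] at hl
  rw [Finsupp.linearCombination_apply] at hl0
  set P := l.support.filter (fun v => 0 < l v) with hP
  set N := l.support.filter (fun v => l v < 0) with hN
  have hPsub : ∀ v ∈ P, v ∈ IndSet t Φ := fun v hv => hl (Finset.mem_filter.1 hv).1
  have hNsub : ∀ v ∈ N, v ∈ IndSet t Φ := fun v hv => hl (Finset.mem_filter.1 hv).1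
  have hdisj : Disjoint P N := by
    rw [Finset.disjoint_left]
    intro v hvP hvN
    have h1 := (Finset.mem_filter.1 hvP).2
    have h2 := (Finset.mem_filter.1 hvN).2
    linarith
  have hunion : l.support = P ∪ N := by
    ext v
    simp only [hP, hN, Finset.mem_union, Finset.mem_filter, Finsupp.mem_support_iff]
    constructor
    · intro hv
      rcases lt_trichotomy (l v) 0 with h | h | h
      · exact Or.inr ⟨hv, h⟩
      · exact absurd h hv
      · exact Or.inl ⟨hv, h⟩
    · rintro (⟨h, _⟩ | ⟨h, _⟩) <;> exact h
  have hsum0 : ∑ v ∈ P, l v • v + ∑ v ∈ N, l v • v = 0 := by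
    rw [← Finset.sum_union hdisj, ← hunion]
    exact hl0
  set x := ∑ v ∈ P, l v • v with hx
  have hNx : ∑ v ∈ N, l v • v = -x := by
    rw [eq_neg_iff_add_eq_zero, add_comm]; exact hsum0
  have hxx : ⟪x, x⟫ ≤ 0 := by
    have hcalc : ⟪x, x⟫ = ∑ v ∈ P, ∑ w ∈ N, l v * ((- l w) * ⟪v, w⟫) := by
      calc ⟪x, x⟫ = ∑ v ∈ P, l v * ⟪v, x⟫ := by
              rw [hx, sum_inner]
              exact Finset.sum_congr rfl fun v _ => real_inner_smul_left v x (l v)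
        _ = ∑ v ∈ P, ∑ w ∈ N, l v * ((- l w) * ⟪v, w⟫) := by
              refine Finset.sum_congr rfl fun v _ => ?_
              have : ⟪v, x⟫ = ∑ w ∈ N, (- l w) * ⟪v, w⟫ := by
                have h1 : x = ∑ w ∈ N, (- l w) • w := by
                  simp only [neg_smul]
                  rw [Finset.sum_neg_distrib, hNx, neg_neg]
                rw [h1, inner_sum]
                exact Finset.sum_congr rfl fun w _ => real_inner_smul_right v w _
              rw [this, Finset.mul_sum]
    rw [hcalc]
    apply Finset.sum_nonpos
    intro v hv
    apply Finset.sum_nonpos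
    intro w hw
    have hv' := Finset.mem_filter.1 hv
    have hw' := Finset.mem_filter.1 hw
    have hvw : v ≠ w := by
      rintro rfl; exact absurd hv'.2 (not_lt.2 (le_of_lt hw'.2))
    have hvw' := indSet_inner_nonpos hΦ ht (hPsub v hv) (hNsub w hw) hvw
    have h1 : 0 ≤ - l w := by linarith [hw'.2]
    have h2 : 0 ≤ l v := le_of_lt hv'.2
    exact mul_nonpos_of_nonneg_of_nonpos h2 (mul_nonpos_of_nonneg_of_nonpos h1 hvw')
  have hx0 : x = 0 := by
    have := le_antisymm hxx real_inner_self_nonneg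
    exact inner_self_eq_zero.1 this
  have hPempty : P = ∅ := by
    by_contra hne
    have hnonempty : P.Nonempty := Finset.nonempty_of_ne_empty hne
    have : (0:ℝ) < ∑ v ∈ P, l v * ⟪t, v⟫ := by
      refine Finset.sum_pos (fun v hv => ?_) hnonempty
      have hv' := Finset.mem_filter.1 hv
      exact mul_pos hv'.2 (hPsub v hv).1.2
    have h0 : ∑ v ∈ P, l v * ⟪t, v⟫ = ⟪t, x⟫ := by
      rw [hx, inner_sum]
      exact Finset.sum_congr rfl fun v _ => (real_inner_smul_right t v (l v)).symm
    rw [h0, hx0, inner_zero_right] at this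
    exact lt_irrefl _ this
  have hNempty : N = ∅ := by
    by_contra hne
    have hnonempty : N.Nonempty := Finset.nonempty_of_ne_empty hne
    have hlt : ∑ v ∈ N, l v * ⟪t, v⟫ < 0 := by
      have hthis : (0:ℝ) < ∑ v ∈ N, (- l v) * ⟪t, v⟫ := by
        refine Finset.sum_pos (fun v hv => ?_) hnonempty
        have hv' := Finset.mem_filter.1 hv
        exact mul_pos (by linarith [hv'.2]) (hNsub v hv).1.2
      simp only [neg_mul] at hthis
      rw [Finset.sum_neg_distrib] at hthis
      linarith
    have h0 : ∑ v ∈ N, l v * ⟪t, v⟫ = ⟪t, -x⟫ := by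
      rw [← hNx, inner_sum]
      exact Finset.sum_congr rfl fun v _ => (real_inner_smul_right t v (l v)).symm
    rw [h0, hx0, neg_zero, inner_zero_right] at hlt
    exact lt_irrefl _ hlt
  have : l.support = ∅ := by rw [hunion, hPempty, hNempty]; simp
  exact Finsupp.support_eq_empty.1 this



lemma isPositive_mem_span {S : Set V} {α : V} (h : IsPositive S α) :
    α ∈ Submodule.span ℝ S := by
  obtain ⟨c, hcs, hcv, -⟩ := h
  rw [hcv, Finsupp.sum]
  exact Submodule.sum_mem _ fun v hv =>
    Submodule.smul_mem _ _ (Submodule.subset_span (hcs hv))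

lemma neg_finsupp_sum (c : V →₀ ℤ) :
    (-c).sum (fun v n => (n : ℝ) • v) = - c.sum (fun v n => (n : ℝ) • v) := by
  rw [Finsupp.sum, Finsupp.sum, Finsupp.support_neg, ← Finset.sum_neg_distrib]
  refine Finset.sum_congr rfl fun v _ => ?_
  rw [Finsupp.neg_apply]
  push_cast
  rw [neg_smul]

/-- The indecomposable positive roots with respect to a regular vector `t` form a base. -/
lemma isBase_indSet {Φ : Set V} (hΦ : IsRootSystem Φ) {t : V}
    (ht : ∀ α ∈ Φ, ⟪t, α⟫ ≠ 0) : IsBase Φ (IndSet t Φ) := by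
  have hsubΦ : IndSet t Φ ⊆ Φ := fun x hx => hx.1.1
  have hrep : ∀ α ∈ Φ, 0 < ⟪t, α⟫ → IsPositive (IndSet t Φ) α := by
    intro α hα hpos
    exact posSet_isPositive hΦ.1 t α ⟨hα, hpos⟩
  refine ⟨hsubΦ, indSet_linearIndependent hΦ ht, ?_, ?_⟩
  · refine le_antisymm (Submodule.span_mono hsubΦ) (Submodule.span_le.2 fun α hα => ?_)
    rcases lt_or_gt_of_ne (ht α hα) with hneg | hgt
    · have hnegmem : -α ∈ Φ := rs_neg_mem hΦ hα
      have : 0 < ⟪t, -α⟫ := by rw [inner_neg_right]; linarith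
      have hmem := isPositive_mem_span (hrep _ hnegmem this)
      have := Submodule.neg_mem _ hmem
      rwa [neg_neg] at this
    · exact isPositive_mem_span (hrep α hα hgt)
  · intro α hα
    rcases lt_or_gt_of_ne (ht α hα) with hneg | hgt
    · have hnegmem : -α ∈ Φ := rs_neg_mem hΦ hα
      have hp : 0 < ⟪t, -α⟫ := by rw [inner_neg_right]; linarith
      obtain ⟨c, hcs, hcv, hc0⟩ := hrep _ hnegmem hp
      refine ⟨-c, ?_, ?_, Or.inr fun v => ?_⟩
      · rwa [Finsupp.support_neg]
      · rw [neg_finsupp_sum, ← hcv, neg_neg]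
      · rw [Finsupp.neg_apply]; exact neg_nonpos.2 (hc0 v)
    · obtain ⟨c, hcs, hcv, hc0⟩ := hrep α hα hgt
      exact ⟨c, hcs, hcv, Or.inl hc0⟩

/-- Existence of a vector in `Wᗮ` not orthogonal to any member of a finite set of
vectors outside `W`. -/
lemma exists_regular_orth [FiniteDimensional ℝ V] (W : Submodule ℝ V)
    {F : Set V} (hF : F.Finite) (hFW : ∀ ψ ∈ F, ψ ∉ W) :
    ∃ t₀ ∈ Wᗮ, ∀ ψ ∈ F, ⟪t₀, ψ⟫ ≠ 0 := by
  classical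
  revert hFW
  refine Set.Finite.induction_on F hF ?_ ?_
  · exact fun _ => ⟨0, Submodule.zero_mem _, fun ψ hψ => absurd hψ (Set.notMem_empty ψ)⟩
  · rintro ψ F hψF hFfin ih hFW
    obtain ⟨t₀, ht₀W, ht₀⟩ := ih (fun φ hφ => hFW φ (Set.mem_insert_of_mem ψ hφ))
    have hψW : ψ ∉ W := hFW ψ (Set.mem_insert ψ F)
    set p : V := ψ - (W.orthogonalProjectionOnto ψ : V) with hp
    have hpW : p ∈ Wᗮ := Submodule.sub_starProjection_mem_orthogonal ψ
    have hpne : p ≠ 0 := by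
      intro h
      apply hψW
      rw [← Submodule.starProjection_eq_self_iff (K := W)]
      rw [sub_eq_zero] at h
      exact h.symm
    have hpψ : ⟪p, ψ⟫ ≠ 0 := by
      have hproj : (W.orthogonalProjectionOnto ψ : V) ∈ W := Submodule.coe_mem _
      have h1 : ⟪p, ψ⟫ = ⟪p, p⟫ + ⟪p, (W.orthogonalProjectionOnto ψ : V)⟫ := by
        rw [← inner_add_right]
        congr 1
        rw [hp]; abel
      have h2 : ⟪p, (W.orthogonalProjectionOnto ψ : V)⟫ = 0 := by
        rw [real_inner_comm]
        exact hpW _ hproj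
      rw [h1, h2, add_zero]
      exact inner_self_ne_zero.2 hpne
    -- choose δ avoiding finitely many bad values
    obtain ⟨δ, hδ⟩ := ((hFfin.insert ψ).image (fun φ => -⟪t₀, φ⟫ / ⟪p, φ⟫)).exists_notMem
    refine ⟨t₀ + δ • p, Submodule.add_mem _ ht₀W (Submodule.smul_mem _ _ hpW), ?_⟩
    intro φ hφ
    rw [inner_add_left, real_inner_smul_left]
    intro hcon
    by_cases hpφ : ⟪p, φ⟫ = 0
    · rw [hpφ, mul_zero, add_zero] at hcon
      rcases Set.mem_insert_iff.1 hφ with rfl | hmem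
      · exact hpψ hpφ
      · exact ht₀ φ hmem hcon
    · apply hδ
      refine ⟨φ, hφ, ?_⟩
      field_simp
      linarith

lemma exists_dual_pair {ψ₁ ψ₂ : V} (hli : LinearIndependent ℝ ![ψ₁, ψ₂]) :
    ∃ t₁ : V, ⟪t₁, ψ₁⟫ = 1 ∧ ⟪t₁, ψ₂⟫ = 1 := by
  have hpair := LinearIndependent.pair_iff.1 hli
  have hψ₁ : ψ₁ ≠ 0 := by
    intro h; have := hpair 1 0 (by rw [h]; simp); simp at this
  have hψ₂ : ψ₂ ≠ 0 := by
    intro h; have := hpair 0 1 (by rw [h]; simp); simp at this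
  have hCS1 : ⟪ψ₁, ψ₂⟫ < ‖ψ₁‖ * ‖ψ₂‖ := by
    rw [inner_lt_norm_mul_iff_real]
    intro hcon
    have := hpair ‖ψ₂‖ (-‖ψ₁‖) (by rw [neg_smul, ← hcon]; abel)
    exact hψ₂ (norm_eq_zero.1 this.1)
  have hCS2 : -⟪ψ₁, ψ₂⟫ < ‖ψ₁‖ * ‖ψ₂‖ := by
    have h := @inner_lt_norm_mul_iff_real V _ _ (-ψ₁) ψ₂
    rw [inner_neg_left, norm_neg] at h
    rw [h]
    intro hcon
    rw [smul_neg] at hcon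
    have := hpair (-‖ψ₂‖) (-‖ψ₁‖) (by rw [neg_smul, neg_smul, ← hcon]; abel)
    have h2 : ‖ψ₂‖ = 0 := by linarith [neg_eq_zero.1 this.1]
    exact hψ₂ (norm_eq_zero.1 h2)
  set g11 := ⟪ψ₁, ψ₁⟫ with hg11
  set g22 := ⟪ψ₂, ψ₂⟫ with hg22
  set g12 := ⟪ψ₁, ψ₂⟫ with hg12
  have hn1 : g11 = ‖ψ₁‖ * ‖ψ₁‖ := real_inner_self_eq_norm_mul_norm ψ₁
  have hn2 : g22 = ‖ψ₂‖ * ‖ψ₂‖ := real_inner_self_eq_norm_mul_norm ψ₂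
  have hdet : 0 < g11 * g22 - g12 * g12 := by nlinarith
  set d := g11 * g22 - g12 * g12 with hd
  refine ⟨d⁻¹ • ((g22 - g12) • ψ₁ + (g11 - g12) • ψ₂), ?_, ?_⟩
  all_goals rw [real_inner_smul_left, inner_add_left, real_inner_smul_left,
    real_inner_smul_left]
  all_goals have hdne : d ≠ 0 := ne_of_gt hdet
  · have e1 : (inner ℝ ψ₁ ψ₁ : ℝ) = g11 := hg11.symm
    have e2 : (inner ℝ ψ₂ ψ₁ : ℝ) = g12 := by rw [hg12]; exact real_inner_comm ψ₁ ψ₂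
    rw [e1, e2]
    field_simp
    rw [hd]; ring
  · have e1 : (inner ℝ ψ₂ ψ₂ : ℝ) = g22 := hg22.symm
    have e2 : (inner ℝ ψ₁ ψ₂ : ℝ) = g12 := hg12.symm
    rw [e1, e2]
    field_simp
    rw [hd]; ring

lemma exists_pos_lb {F : Set V} (hF : F.Finite) (f : V → ℝ) (h : ∀ x ∈ F, 0 < f x) :
    ∃ m, 0 < m ∧ ∀ x ∈ F, m ≤ f x := by
  rcases F.eq_empty_or_nonempty with rfl | hne
  · exact ⟨1, one_pos, fun x hx => absurd hx (Set.notMem_empty x)⟩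
  · have hs : hF.toFinset.Nonempty := by
      rwa [Set.Finite.toFinset_nonempty]
    refine ⟨hF.toFinset.inf' hs f, ?_, fun x hx => Finset.inf'_le f (hF.mem_toFinset.2 hx)⟩
    obtain ⟨x, hx, hxeq⟩ := Finset.exists_mem_eq_inf' hs f
    rw [hxeq]
    exact h x (hF.mem_toFinset.1 hx)

lemma exists_abs_ub {F : Set V} (hF : F.Finite) (f : V → ℝ) :
    ∃ M, 0 ≤ M ∧ ∀ x ∈ F, |f x| ≤ M := by
  refine ⟨∑ x ∈ hF.toFinset, |f x|, Finset.sum_nonneg fun x _ => abs_nonneg _, fun x hx => ?_⟩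
  exact Finset.single_le_sum (fun y _ => abs_nonneg (f y)) (hF.mem_toFinset.2 hx)


/-- if `ψ₁, ψ₂` are linearly independent roots of `Ψ` such that `{ψ₁, ψ₂}`
is a base of the root subsystem `Ψ' = Ψ ∩ (ℝψ₁ + ℝψ₂)`, then `{ψ₁, ψ₂}` extends to a
base of `Ψ`. -/
theorem stmt2 {V : Type*} [NormedAddCommGroup V] [InnerProductSpace ℝ V]
    [FiniteDimensional ℝ V] (Ψ : Set V) (hΨ : IsRootSystem Ψ)
    (ψ₁ ψ₂ : V) (h₁ : ψ₁ ∈ Ψ) (h₂ : ψ₂ ∈ Ψ)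
    (hli : LinearIndependent ℝ ![ψ₁, ψ₂])
    (hbase : IsBase (Ψ ∩ (Submodule.span ℝ ({ψ₁, ψ₂} : Set V) : Set V))
      ({ψ₁, ψ₂} : Set V)) :
    ∃ Sg : Set V, IsBase Ψ Sg ∧ ψ₁ ∈ Sg ∧ ψ₂ ∈ Sg := by
  classical
  set W : Submodule ℝ V := Submodule.span ℝ ({ψ₁, ψ₂} : Set V) with hW
  have hψ₁W : ψ₁ ∈ W := Submodule.subset_span (by simp)
  have hψ₂W : ψ₂ ∈ W := Submodule.subset_span (by simp)
  have hψ₁₂ : ψ₁ ≠ ψ₂ := by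
    intro h
    have := (LinearIndependent.pair_iff.1 hli) 1 (-1) (by rw [h]; simp)
    simp at this
  obtain ⟨t₁, ht₁1, ht₁2⟩ := exists_dual_pair hli
  -- coordinates of roots lying in W
  have hcoord : ∀ ψ ∈ Ψ, ψ ∈ (W : Set V) → ∃ a b : ℤ,
      ψ = (a : ℝ) • ψ₁ + (b : ℝ) • ψ₂ ∧ ((0 ≤ a ∧ 0 ≤ b) ∨ (a ≤ 0 ∧ b ≤ 0)) := by
    intro ψ hψ hψW'
    obtain ⟨c, hcs, hcv, hsign⟩ := hbase.2.2.2 ψ ⟨hψ, hψW'⟩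
    have hsub : c.support ⊆ ({ψ₁, ψ₂} : Finset V) := by
      intro v hv
      have := hcs hv
      simp only [Set.mem_insert_iff, Set.mem_singleton_iff] at this
      simp only [Finset.mem_insert, Finset.mem_singleton]
      exact this
    refine ⟨c ψ₁, c ψ₂, ?_, ?_⟩
    · rw [hcv, Finsupp.sum_of_support_subset c hsub _ (fun i _ => by simp),
        Finset.sum_pair hψ₁₂]
    · rcases hsign with h | h
      exacts [Or.inl ⟨h ψ₁, h ψ₂⟩, Or.inr ⟨h ψ₁, h ψ₂⟩]
  -- a vector in Wᗮ not orthogonal to any root outside W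
  obtain ⟨t₀, ht₀W, ht₀⟩ := exists_regular_orth W (hΨ.1.diff (t := (W : Set V)))
    (fun ψ hψ => hψ.2)
  rw [Submodule.mem_orthogonal] at ht₀W
  have ht₀ψ₁ : ⟪t₀, ψ₁⟫ = 0 := by rw [real_inner_comm]; exact ht₀W ψ₁ hψ₁W
  have ht₀ψ₂ : ⟪t₀, ψ₂⟫ = 0 := by rw [real_inner_comm]; exact ht₀W ψ₂ hψ₂W
  obtain ⟨m, hm0, hmlb⟩ := exists_pos_lb (hΨ.1.diff (t := (W : Set V))) (fun ψ => |⟪t₀, ψ⟫|)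
    (fun ψ hψ => abs_pos.2 (ht₀ ψ hψ))
  obtain ⟨M, hM0, hMub⟩ := exists_abs_ub hΨ.1 (fun ψ => ⟪t₁, ψ⟫)
  set ε := m / (2 * (M + 1)) with hε
  have hε0 : 0 < ε := by positivity
  have hεM : ε * (M + 1) < m := by
    rw [hε, div_mul_eq_mul_div, mul_comm (2:ℝ) (M+1), ← div_div, mul_div_assoc,
      div_self (by positivity : (M:ℝ)+1 ≠ 0), mul_one]
    linarith
  set t := t₀ + ε • t₁ with htdef
  have htψ₁ : ⟪t, ψ₁⟫ = ε := by
    rw [htdef, inner_add_left, real_inner_smul_left, ht₀ψ₁, ht₁1]; ring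
  have htψ₂ : ⟪t, ψ₂⟫ = ε := by
    rw [htdef, inner_add_left, real_inner_smul_left, ht₀ψ₂, ht₁2]; ring
  -- roots outside W have |⟪t, ψ⟫| > ε
  have hout : ∀ ψ ∈ Ψ, ψ ∉ (W : Set V) → ε < |⟪t, ψ⟫| := by
    intro ψ hψ hψW'
    have h1 : m ≤ |⟪t₀, ψ⟫| := hmlb ψ ⟨hψ, hψW'⟩
    have h2 : |⟪t₁, ψ⟫| ≤ M := hMub ψ hψ
    have hsplit : ⟪t, ψ⟫ = ⟪t₀, ψ⟫ + ε * ⟪t₁, ψ⟫ := by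
      rw [htdef, inner_add_left, real_inner_smul_left]
    have hb : |ε * ⟪t₁, ψ⟫| ≤ ε * M := by
      rw [abs_mul, abs_of_pos hε0]
      exact mul_le_mul_of_nonneg_left h2 (le_of_lt hε0)
    have htri : |⟪t₀, ψ⟫| - |ε * ⟪t₁, ψ⟫| ≤ |⟪t₀, ψ⟫ + ε * ⟪t₁, ψ⟫| := by
      have h3 := abs_sub_abs_le_abs_sub (⟪t₀, ψ⟫) (-(ε * ⟪t₁, ψ⟫))
      rw [abs_neg, sub_neg_eq_add] at h3
      exact h3
    have hexp : ε * (M + 1) = ε * M + ε := by ring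
    rw [hsplit]
    linarith
  -- coordinates of positive roots in W
  have hposW : ∀ β ∈ PosSet t Ψ, β ∈ (W : Set V) → ∃ a b : ℤ,
      β = (a : ℝ) • ψ₁ + (b : ℝ) • ψ₂ ∧ 0 ≤ a ∧ 0 ≤ b ∧ 1 ≤ a + b := by
    intro β hβ hβW
    obtain ⟨a, b, habeq, hsign⟩ := hcoord β hβ.1 hβW
    have hβval : ⟪t, β⟫ = ((a : ℝ) + b) * ε := by
      rw [habeq, inner_add_right, real_inner_smul_right, real_inner_smul_right, htψ₁, htψ₂]
      ring
    have hpos : (0 : ℝ) < (a : ℝ) + b := by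
      have h := hβ.2
      rw [hβval] at h
      by_contra hc
      push_neg at hc
      nlinarith
    have hz : 0 < a + b := by exact_mod_cast hpos
    rcases hsign with ⟨ha, hb⟩ | ⟨ha, hb⟩
    · exact ⟨a, b, habeq, ha, hb, by omega⟩
    · omega
  -- regularity of t
  have ht : ∀ α ∈ Ψ, ⟪t, α⟫ ≠ 0 := by
    intro α hα
    by_cases hαW : α ∈ (W : Set V)
    · obtain ⟨a, b, habeq, hsign⟩ := hcoord α hα hαW
      have hval : ⟪t, α⟫ = ((a : ℝ) + b) * ε := by
        rw [habeq, inner_add_right, real_inner_smul_right, real_inner_smul_right, htψ₁, htψ₂]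
        ring
      rw [hval]
      have hab0 : a + b ≠ 0 := by
        intro h
        have hzz : a = 0 ∧ b = 0 := by rcases hsign with ⟨h1, h2⟩ | ⟨h1, h2⟩ <;> omega
        rw [hzz.1, hzz.2] at habeq
        simp only [Int.cast_zero, zero_smul, add_zero] at habeq
        exact hΨ.2.1 (habeq ▸ hα)
      have : ((a : ℝ) + b) ≠ 0 := by exact_mod_cast hab0
      positivity
    · intro hcon
      have := hout α hα hαW
      rw [hcon, abs_zero] at this
      linarith
  -- indecomposability of roots in the base of the rank-2 subsystem
  have hIndGen : ∀ p q : ℤ, p + q = 1 → 0 ≤ p → 0 ≤ q →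
      ∀ ψ, ψ = (p : ℝ) • ψ₁ + (q : ℝ) • ψ₂ → ψ ∈ Ψ → ψ ∈ IndSet t Ψ := by
    intro p q hpq hp hq ψ hψeq hψΨ
    have hpq' : (p : ℝ) + q = 1 := by exact_mod_cast hpq
    have htψ : ⟪t, ψ⟫ = ε := by
      rw [hψeq, inner_add_right, real_inner_smul_right, real_inner_smul_right, htψ₁, htψ₂]
      nlinarith
    refine ⟨⟨hψΨ, by rw [htψ]; exact hε0⟩, ?_⟩
    rintro ⟨β, hβ, γ, hγ, hsum⟩
    have hβγ : ⟪t, β⟫ + ⟪t, γ⟫ = ε := by rw [← htψ, ← hsum, inner_add_right]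
    have hβε : ⟪t, β⟫ < ε := by linarith [hγ.2]
    have hγε : ⟪t, γ⟫ < ε := by linarith [hβ.2]
    have hβW : β ∈ (W : Set V) := by
      by_contra hc
      have := hout β hβ.1 hc
      rw [abs_of_pos hβ.2] at this
      linarith
    have hγW : γ ∈ (W : Set V) := by
      by_contra hc
      have := hout γ hγ.1 hc
      rw [abs_of_pos hγ.2] at this
      linarith
    obtain ⟨a, b, habeq, ha, hb, hab⟩ := hposW β hβ hβW
    obtain ⟨c, d, hcdeq, hc, hd, hcd⟩ := hposW γ hγ hγW
    have hcomb : ((a : ℝ) + c) • ψ₁ + ((b : ℝ) + d) • ψ₂ = (p : ℝ) • ψ₁ + (q : ℝ) • ψ₂ := by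
      rw [← hψeq, ← hsum, habeq, hcdeq, add_smul, add_smul]
      abel
    have hdiff : ((a : ℝ) + c - p) • ψ₁ + ((b : ℝ) + d - q) • ψ₂ = 0 := by
      rw [sub_smul, sub_smul]
      rw [← sub_eq_zero] at hcomb
      calc ((a : ℝ) + c) • ψ₁ - (p : ℝ) • ψ₁ + (((b : ℝ) + d) • ψ₂ - (q : ℝ) • ψ₂)
          = ((a : ℝ) + c) • ψ₁ + ((b : ℝ) + d) • ψ₂ - ((p : ℝ) • ψ₁ + (q : ℝ) • ψ₂) := by abel
        _ = 0 := hcomb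
    have hzero := (LinearIndependent.pair_iff.1 hli) _ _ hdiff
    have h1 : a + c = p := by
      have : (a : ℝ) + c = p := by linarith [sub_eq_zero.1 (by linarith [hzero.1] : (a:ℝ) + c - p = 0)]
      exact_mod_cast this
    have h2 : b + d = q := by
      have : (b : ℝ) + d = q := by linarith [hzero.2]
      exact_mod_cast this
    omega
  refine ⟨IndSet t Ψ, isBase_indSet hΨ ht, ?_, ?_⟩
  · exact hIndGen 1 0 (by ring) (by norm_num) le_rfl ψ₁ (by push_cast; simp) h₁
  · exact hIndGen 0 1 (by ring) le_rfl (by norm_num) ψ₂ (by push_cast; simp) h₂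
end

section
/- Let Φ be a finite reduced crystallographic root system with base S, let s be a folding of S, and let α ≠ β ∈ S be such that ⟨α|β∨⟩ ≠ ⟨sα|sβ∨⟩ or ⟨β|α∨⟩ ≠ ⟨sβ|sα∨⟩. Then the set S₀ = {α, β, sα, sβ} has exactly three elements; writing S₀ = {γ₁, γ₂, γ₃} with sγ₁ = γ₃, sγ₃ = γ₁ and sγ₂ = γ₂, after possibly exchanging γ₁ and γ₃ the Cartan integers on S₀ are those of type B₃, namely ⟨γ₁|γ₂∨⟩ = ⟨γ₃|γ₂∨⟩ = −1, ⟨γ₂|γ₁∨⟩ = −1, ⟨γ₂|γ₃∨⟩ = −2, and ⟨γ₁|γ₃∨⟩ = ⟨γ₃|γ₁∨⟩ = 0. -/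
open RealInnerProductSpace

variable {V : Type*} [NormedAddCommGroup V] [InnerProductSpace ℝ V]

/-- `s` is a folding of the base `S`: an involution of `S` such that
`⟨α|sα∨⟩ = 0` whenever `sα ≠ α`, and `⟨α - sα | β∨ + sβ∨⟩ = 0` for all `α, β ∈ S`. -/
def IsFolding (S : Set V) (s : V → V) : Prop :=
  (∀ α ∈ S, s α ∈ S) ∧ (∀ α ∈ S, s (s α) = α) ∧
  (∀ α ∈ S, s α ≠ α → pairR α (s α) = 0) ∧
  (∀ α ∈ S, ∀ β ∈ S, pairR (α - s α) β + pairR (α - s α) (s β) = 0)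

lemma rep_eq_zero {S : Set V} (hli : LinearIndependent ℝ ((↑) : S → V))
    (f : V →₀ ℝ) (hf : (↑f.support : Set V) ⊆ S)
    (h : (f.sum fun v r => r • v) = 0) : f = 0 := by
  refine (linearIndepOn_iff (v := id)).mp hli f ((Finsupp.mem_supported ℝ f).mpr hf) ?_
  rw [Finsupp.linearCombination_apply]
  simpa using h

lemma inner_self_pos' {x : V} (hx : x ≠ 0) : 0 < ⟪x, x⟫ :=
  lt_of_le_of_ne real_inner_self_nonneg fun h => hx (inner_self_eq_zero.mp h.symm)

lemma li4 {S : Set V} (hli : LinearIndependent ℝ ((↑) : S → V))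
    {x y z w : V} (hx : x ∈ S) (hy : y ∈ S) (hz : z ∈ S) (hw : w ∈ S)
    (hxy : x ≠ y) (hxz : x ≠ z) (hxw : x ≠ w) (hyz : y ≠ z) (hyw : y ≠ w) (hzw : z ≠ w)
    {a b c d : ℝ} (h : a • x + b • y + c • z + d • w = 0) :
    a = 0 ∧ b = 0 ∧ c = 0 ∧ d = 0 := by
  set f : V →₀ ℝ := Finsupp.single x a + Finsupp.single y b + Finsupp.single z c
      + Finsupp.single w d with hfdef
  have hsum : (f.sum fun v r => r • v) = a • x + b • y + c • z + d • w := by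
    rw [hfdef, Finsupp.sum_add_index' (fun v => zero_smul ℝ v) (fun v r₁ r₂ => add_smul r₁ r₂ v),
      Finsupp.sum_add_index' (fun v => zero_smul ℝ v) (fun v r₁ r₂ => add_smul r₁ r₂ v),
      Finsupp.sum_add_index' (fun v => zero_smul ℝ v) (fun v r₁ r₂ => add_smul r₁ r₂ v),
      Finsupp.sum_single_index (zero_smul ℝ x), Finsupp.sum_single_index (zero_smul ℝ y),
      Finsupp.sum_single_index (zero_smul ℝ z), Finsupp.sum_single_index (zero_smul ℝ w)]
  have hf0 : f = 0 := by
    refine rep_eq_zero hli f ?_ (by rw [hsum]; exact h)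
    intro v hv
    simp only [Finset.mem_coe, Finsupp.mem_support_iff, hfdef, Finsupp.add_apply,
      Finsupp.single_apply] at hv
    by_cases h1 : x = v; · exact h1 ▸ hx
    by_cases h2 : y = v; · exact h2 ▸ hy
    by_cases h3 : z = v; · exact h3 ▸ hz
    by_cases h4 : w = v; · exact h4 ▸ hw
    simp [h1, h2, h3, h4] at hv
  refine ⟨?_, ?_, ?_, ?_⟩
  · have := DFunLike.congr_fun hf0 x
    simpa [hfdef, Finsupp.single_apply, hxy.symm, hxz.symm, hxw.symm] using this
  · have := DFunLike.congr_fun hf0 y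
    simpa [hfdef, Finsupp.single_apply, hxy, hyz.symm, hyw.symm] using this
  · have := DFunLike.congr_fun hf0 z
    simpa [hfdef, Finsupp.single_apply, hxz, hyz, hzw.symm] using this
  · have := DFunLike.congr_fun hf0 w
    simpa [hfdef, Finsupp.single_apply, hxw, hyw, hzw] using this

lemma base_inner_nonpos {Φ S : Set V} (hΦ : IsRootSystem Φ) (hS : IsBase Φ S)
    {α β : V} (hα : α ∈ S) (hβ : β ∈ S) (hne : α ≠ β) : ⟪α, β⟫ ≤ 0 := by
  obtain ⟨hfin, h0, hrefl, hint, hred⟩ := hΦ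
  obtain ⟨hsub, hli, hspan, hrep⟩ := hS
  by_contra hpos
  push_neg at hpos
  obtain ⟨n, hn⟩ := hint α (hsub hα) β (hsub hβ)
  have hα0 : α ≠ 0 := fun h => h0 (h ▸ hsub hα)
  have hrα : 0 < ⟪α, α⟫ := inner_self_pos' hα0
  have hn1 : 1 ≤ n := by
    have h1 : (0:ℝ) < (n:ℝ) := by
      rw [← hn]
      unfold pairR
      apply div_pos _ hrα
      rw [real_inner_comm]
      linarith
    have : (0:ℤ) < n := by exact_mod_cast h1
    omega
  have hγ : β - (n:ℝ) • α ∈ Φ := by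
    have h2 := hrefl α (hsub hα) β (hsub hβ)
    unfold reflV at h2
    rwa [hn] at h2
  obtain ⟨c, hcsup, hcval, hcsign⟩ := hrep _ hγ
  set f : V →₀ ℝ := Finsupp.mapRange (Int.cast : ℤ → ℝ) Int.cast_zero c
      + Finsupp.single α (n:ℝ) + Finsupp.single β (-1:ℝ) with hfdef
  have hmr : ((Finsupp.mapRange (Int.cast : ℤ → ℝ) Int.cast_zero c).sum fun v r => r • v)
      = β - (n:ℝ) • α := by
    rw [Finsupp.sum_mapRange_index (fun v => zero_smul ℝ v)]
    exact hcval.symm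
  have hsum : (f.sum fun v r => r • v) = 0 := by
    rw [hfdef, Finsupp.sum_add_index' (fun v => zero_smul ℝ v) (fun v r₁ r₂ => add_smul r₁ r₂ v),
      Finsupp.sum_add_index' (fun v => zero_smul ℝ v) (fun v r₁ r₂ => add_smul r₁ r₂ v),
      hmr, Finsupp.sum_single_index (zero_smul ℝ α), Finsupp.sum_single_index (zero_smul ℝ β)]
    module
  have hsupp : (↑f.support : Set V) ⊆ S := by
    intro v hv
    rw [Finset.mem_coe, Finsupp.mem_support_iff] at hv
    by_cases h1 : v = α; · exact h1 ▸ hα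
    by_cases h2 : v = β; · exact h2 ▸ hβ
    by_cases h3 : c v = 0
    · exfalso
      apply hv
      simp [hfdef, Finsupp.single_apply, Ne.symm h1, Ne.symm h2, h3]
    · exact hcsup (by simpa [Finsupp.mem_support_iff] using h3)
  have hf0 : f = 0 := rep_eq_zero hli f hsupp hsum
  have hfα := DFunLike.congr_fun hf0 α
  have hfβ := DFunLike.congr_fun hf0 β
  simp only [hfdef, Finsupp.add_apply, Finsupp.single_apply, Finsupp.mapRange_apply,
    Finsupp.coe_zero, Pi.zero_apply] at hfα hfβ
  rw [Finsupp.single_eq_same, Finsupp.single_eq_of_ne' (Ne.symm hne)] at hfα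
  rw [Finsupp.single_eq_same, Finsupp.single_eq_of_ne' hne] at hfβ
  have hcα : (c α : ℝ) = -(n:ℝ) := by linarith [hfα]
  have hcβ : (c β : ℝ) = 1 := by linarith [hfβ]
  have hcα' : c α = -n := by exact_mod_cast hcα
  have hcβ' : c β = 1 := by exact_mod_cast hcβ
  rcases hcsign with hs | hs
  · have := hs α; omega
  · have := hs β; omega

lemma pairR_sub (x y v : V) : pairR (x - y) v = pairR x v - pairR y v := by
  unfold pairR; rw [inner_sub_left]; ring

lemma pairR_rel {x v : V} {n : ℤ} (hv : 0 < ⟪v, v⟫) (h : pairR x v = (n:ℝ)) :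
    2*⟪x, v⟫ = (n:ℝ)*⟪v, v⟫ := by
  unfold pairR at h; field_simp at h; linarith

lemma pairR_zero_inner {x v : V} (hv : 0 < ⟪v, v⟫) (h : pairR x v = 0) : ⟪x, v⟫ = 0 := by
  unfold pairR at h
  rcases div_eq_zero_iff.mp h with h' | h'
  · linarith
  · exact absurd h' hv.ne'

lemma int_nonpos_of {n : ℤ} {r c : ℝ} (hr : 0 < r) (hc : c ≤ 0) (h : 2*c = (n:ℝ)*r) :
    n ≤ 0 := by
  have : (n:ℝ) ≤ 0 := by nlinarith
  exact_mod_cast this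

lemma int_link {n m : ℤ} {r' c : ℝ} {r : ℝ} (hr' : 0 < r')
    (h1 : 2*c = (n:ℝ)*r) (h2 : 2*c = (m:ℝ)*r') : n = 0 → m = 0 := by
  intro h
  have hn : (n:ℝ) = 0 := by exact_mod_cast h
  have hc : c = 0 := by rw [hn] at h1; linarith
  have hm : (m:ℝ)*r' = 0 := by rw [hc] at h2; linarith
  rcases mul_eq_zero.mp hm with h' | h'
  · exact_mod_cast h'
  · exact absurd h' hr'.ne'


lemma li2 {S : Set V} (hli : LinearIndependent ℝ ((↑) : S → V))
    {x y : V} (hx : x ∈ S) (hy : y ∈ S) (hxy : x ≠ y)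
    {a b : ℝ} (h : a • x + b • y = 0) : a = 0 ∧ b = 0 := by
  set f : V →₀ ℝ := Finsupp.single x a + Finsupp.single y b with hfdef
  have hsum : (f.sum fun v r => r • v) = a • x + b • y := by
    rw [hfdef, Finsupp.sum_add_index' (fun v => zero_smul ℝ v) (fun v r₁ r₂ => add_smul r₁ r₂ v),
      Finsupp.sum_single_index (zero_smul ℝ x), Finsupp.sum_single_index (zero_smul ℝ y)]
  have hf0 : f = 0 := by
    refine rep_eq_zero hli f ?_ (by rw [hsum]; exact h)
    intro v hv
    rw [Finset.mem_coe, Finsupp.mem_support_iff] at hv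
    simp only [hfdef, Finsupp.add_apply, Finsupp.single_apply] at hv
    by_cases h1 : x = v; · exact h1 ▸ hx
    by_cases h2 : y = v; · exact h2 ▸ hy
    simp [h1, h2] at hv
  constructor
  · have := DFunLike.congr_fun hf0 x
    simpa [hfdef, Finsupp.single_apply, hxy.symm] using this
  · have := DFunLike.congr_fun hf0 y
    simpa [hfdef, Finsupp.single_apply, hxy] using this

lemma li3 {S : Set V} (hli : LinearIndependent ℝ ((↑) : S → V))
    {x y z : V} (hx : x ∈ S) (hy : y ∈ S) (hz : z ∈ S)
    (hxy : x ≠ y) (hxz : x ≠ z) (hyz : y ≠ z)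
    {a b c : ℝ} (h : a • x + b • y + c • z = 0) : a = 0 ∧ b = 0 ∧ c = 0 := by
  set f : V →₀ ℝ := Finsupp.single x a + Finsupp.single y b + Finsupp.single z c with hfdef
  have hsum : (f.sum fun v r => r • v) = a • x + b • y + c • z := by
    rw [hfdef, Finsupp.sum_add_index' (fun v => zero_smul ℝ v) (fun v r₁ r₂ => add_smul r₁ r₂ v),
      Finsupp.sum_add_index' (fun v => zero_smul ℝ v) (fun v r₁ r₂ => add_smul r₁ r₂ v),
      Finsupp.sum_single_index (zero_smul ℝ x), Finsupp.sum_single_index (zero_smul ℝ y),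
      Finsupp.sum_single_index (zero_smul ℝ z)]
  have hf0 : f = 0 := by
    refine rep_eq_zero hli f ?_ (by rw [hsum]; exact h)
    intro v hv
    rw [Finset.mem_coe, Finsupp.mem_support_iff] at hv
    simp only [hfdef, Finsupp.add_apply, Finsupp.single_apply] at hv
    by_cases h1 : x = v; · exact h1 ▸ hx
    by_cases h2 : y = v; · exact h2 ▸ hy
    by_cases h3 : z = v; · exact h3 ▸ hz
    simp [h1, h2, h3] at hv
  refine ⟨?_, ?_, ?_⟩
  · have := DFunLike.congr_fun hf0 x
    simpa [hfdef, Finsupp.single_apply, hxy.symm, hxz.symm] using this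
  · have := DFunLike.congr_fun hf0 y
    simpa [hfdef, Finsupp.single_apply, hxy, hyz.symm] using this
  · have := DFunLike.congr_fun hf0 z
    simpa [hfdef, Finsupp.single_apply, hxz, hyz] using this

lemma sq_inner_lt {S : Set V} (hli : LinearIndependent ℝ ((↑) : S → V))
    {x y : V} (hx : x ∈ S) (hy : y ∈ S) (hne : x ≠ y) (hry : 0 < ⟪y, y⟫) :
    ⟪x, y⟫^2 < ⟪x, x⟫ * ⟪y, y⟫ := by
  have hP0 : ⟪y, y⟫ • x + (-⟪x, y⟫) • y ≠ 0 := by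
    intro h
    obtain ⟨h1, -⟩ := li2 hli hx hy hne h
    exact hry.ne' h1
  have hpos := inner_self_pos' hP0
  simp only [inner_add_left, inner_add_right, real_inner_smul_left, real_inner_smul_right] at hpos
  rw [real_inner_comm x y] at hpos
  nlinarith [hpos, hry]

lemma prod_le3 {nA nE : ℤ} {r₁ r₂ u : ℝ} (hr₁ : 0 < r₁) (hr₂ : 0 < r₂)
    (h1 : 2*u = (nA:ℝ)*r₂) (h2 : 2*u = (nE:ℝ)*r₁) (hcs : u^2 < r₁*r₂) : nA*nE ≤ 3 := by
  have key := congrArg₂ (fun a b : ℝ => a*b) h1 h2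
  have h3 : ((nA*nE : ℤ):ℝ)*(r₁*r₂) < 4*(r₁*r₂) := by push_cast; nlinarith [key, hcs]
  have h4 : ((nA*nE : ℤ):ℝ) < 4 := lt_of_mul_lt_mul_right h3 (by positivity)
  have h5 : (nA*nE : ℤ) < 4 := by exact_mod_cast h4
  omega

set_option maxHeartbeats 4000000 in
lemma case2 {Φ S : Set V} (hΦ : IsRootSystem Φ) (hS : IsBase Φ S)
    {s : V → V} (hfold : IsFolding S s) {α β : V} (hα : α ∈ S) (hβ : β ∈ S) (hne : α ≠ β)
    (hdiff : pairR α β ≠ pairR (s α) (s β) ∨ pairR β α ≠ pairR (s β) (s α))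
    (hsa : s α ≠ α) (hsb : s β = β) :
    ({α, β, s α, s β} : Set V).ncard = 3 ∧
    ∃ γ₁ γ₂ γ₃ : V,
      ({α, β, s α, s β} : Set V) = {γ₁, γ₂, γ₃} ∧
      γ₁ ≠ γ₂ ∧ γ₁ ≠ γ₃ ∧ γ₂ ≠ γ₃ ∧
      s γ₁ = γ₃ ∧ s γ₃ = γ₁ ∧ s γ₂ = γ₂ ∧
      pairR γ₁ γ₂ = -1 ∧ pairR γ₃ γ₂ = -1 ∧ pairR γ₂ γ₁ = -1 ∧ pairR γ₂ γ₃ = -2 ∧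
      pairR γ₁ γ₃ = 0 ∧ pairR γ₃ γ₁ = 0 := by
  obtain ⟨hmapS, hinv, horth, heq2⟩ := hfold
  have hsaS := hmapS α hα
  have hsub := hS.1
  have hli := hS.2.1
  have h0 := hΦ.2.1
  have hint := hΦ.2.2.2.1
  have hne0 : ∀ x ∈ S, x ≠ 0 := fun x hx h => h0 (h ▸ hsub hx)
  have hr₁ : 0 < ⟪α, α⟫ := inner_self_pos' (hne0 α hα)
  have hr₂ : 0 < ⟪β, β⟫ := inner_self_pos' (hne0 β hβ)
  have hr₃ : 0 < ⟪s α, s α⟫ := inner_self_pos' (hne0 _ hsaS)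
  have hba : β ≠ s α := by
    intro h
    apply hne
    have h2 := hinv α hα
    rw [← h, hsb] at h2
    exact h2.symm
  have hp0 : pairR α (s α) = 0 := horth α hα hsa
  have ho1 : ⟪α, s α⟫ = 0 := pairR_zero_inner hr₃ hp0
  -- integers
  obtain ⟨A, hA⟩ := hint β (hsub hβ) α (hsub hα)
  obtain ⟨E, hE⟩ := hint α (hsub hα) β (hsub hβ)
  obtain ⟨B, hB⟩ := hint β (hsub hβ) (s α) (hsub hsaS)
  obtain ⟨G, hG⟩ := hint (s α) (hsub hsaS) β (hsub hβ)
  have hAr : 2*⟪α, β⟫ = (A:ℝ)*⟪β, β⟫ := pairR_rel hr₂ hA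
  have hEr : 2*⟪α, β⟫ = (E:ℝ)*⟪α, α⟫ := by
    have := pairR_rel hr₁ hE; rwa [real_inner_comm α β] at this
  have hBr : 2*⟪β, s α⟫ = (B:ℝ)*⟪β, β⟫ := by
    have := pairR_rel hr₂ hB; rwa [real_inner_comm β (s α)] at this
  have hGr : 2*⟪β, s α⟫ = (G:ℝ)*⟪s α, s α⟫ := pairR_rel hr₃ hG
  -- folding equation: A = B
  have hAB : A = B := by
    have h1 := heq2 α hα β hβ
    rw [hsb, pairR_sub, hA, hB] at h1
    have h2 : ((A - B : ℤ):ℝ) = 0 := by push_cast; linarith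
    have h3 : (A - B : ℤ) = 0 := by exact_mod_cast h2
    omega
  have hveq : ⟪β, s α⟫ = ⟪α, β⟫ := by
    rw [hAB] at hAr; linarith
  have hGr' : 2*⟪α, β⟫ = (G:ℝ)*⟪s α, s α⟫ := by rw [← hveq]; exact hGr
  -- hdiff reduces to E ≠ G
  have hEG : E ≠ G := by
    have hprA : pairR (s α) (s β) = pairR α β := by
      rw [hsb, hB, hA, hAB]
    rcases hdiff with h | h
    · exact absurd hprA.symm h
    · intro h'
      apply h
      rw [hsb, hE, hG, h']
  -- nonpositivity
  have hip : ⟪α, β⟫ ≤ 0 := base_inner_nonpos hΦ hS hα hβ hne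
  have hips : ⟪β, s α⟫ ≤ 0 := base_inner_nonpos hΦ hS hβ hsaS hba
  have nA : A ≤ 0 := int_nonpos_of hr₂ hip hAr
  have nE : E ≤ 0 := int_nonpos_of hr₁ hip hEr
  have nG : G ≤ 0 := int_nonpos_of hr₃ hip hGr'
  -- vanishing links
  have lEA := int_link hr₂ hEr hAr
  have lEG := int_link hr₃ hEr hGr'
  have lAE := int_link hr₁ hAr hEr
  have lGE := int_link hr₁ hGr' hEr
  have lGA := int_link hr₂ hGr' hAr
  have lAG := int_link hr₃ hAr hGr'
  -- all nonzero
  have hA1 : A ≤ -1 := by omega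
  have hE1 : E ≤ -1 := by omega
  have hG1 : G ≤ -1 := by omega
  -- products ≤ 3
  have cs1 : ⟪α, β⟫^2 < ⟪α, α⟫*⟪β, β⟫ := sq_inner_lt hli hα hβ hne hr₂
  have cs2 : ⟪β, s α⟫^2 < ⟪β, β⟫*⟪s α, s α⟫ := sq_inner_lt hli hβ hsaS hba hr₃
  have cs2' : ⟪α, β⟫^2 < ⟪s α, s α⟫*⟪β, β⟫ := by rw [← hveq]; nlinarith [cs2]
  have pAE : A*E ≤ 3 := prod_le3 hr₁ hr₂ hAr hEr cs1
  have pAG : A*G ≤ 3 := prod_le3 hr₃ hr₂ hAr hGr' cs2'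
  -- bounds
  have bA : -3 ≤ A := by nlinarith
  have bE : -3 ≤ E := by nlinarith
  have bG : -3 ≤ G := by nlinarith
  have hAm1 : A = -1 := by
    interval_cases A <;> interval_cases E <;> interval_cases G <;> omega
  -- witness vector
  have hP0 : (⟪α,α⟫*⟪s α,s α⟫) • β + (-(⟪α,β⟫*⟪s α,s α⟫)) • α + (-(⟪α,β⟫*⟪α,α⟫)) • (s α) ≠ 0 := by
    intro h
    obtain ⟨h1, -, -⟩ := li3 hli hβ hα hsaS (Ne.symm hne) hba (Ne.symm hsa) h
    have : (0:ℝ) < ⟪α,α⟫*⟪s α,s α⟫ := by positivity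
    rw [h1] at this
    exact lt_irrefl _ this
  have hpos := inner_self_pos' hP0
  have hval : 4*⟪(⟪α,α⟫*⟪s α,s α⟫) • β + (-(⟪α,β⟫*⟪s α,s α⟫)) • α + (-(⟪α,β⟫*⟪α,α⟫)) • (s α),
      (⟪α,α⟫*⟪s α,s α⟫) • β + (-(⟪α,β⟫*⟪s α,s α⟫)) • α + (-(⟪α,β⟫*⟪α,α⟫)) • (s α)⟫
      = ⟪α,α⟫^2*⟪β,β⟫*⟪s α,s α⟫^2*(4 - (A:ℝ)*(E:ℝ) - (A:ℝ)*(G:ℝ)) := by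
    simp only [inner_add_left, inner_add_right, real_inner_smul_left, real_inner_smul_right]
    rw [real_inner_comm α β, real_inner_comm α (s α), real_inner_comm β (s α)]
    rw [ho1, hveq]
    linear_combination (-(⟪α,α⟫*⟪s α,s α⟫^2)*(2*⟪α,β⟫))*hEr
      + (-(⟪α,α⟫*⟪s α,s α⟫^2)*((E:ℝ)*⟪α,α⟫) - (⟪α,α⟫^2*⟪s α,s α⟫)*((G:ℝ)*⟪s α,s α⟫))*hAr
      + (-(⟪α,α⟫^2*⟪s α,s α⟫)*(2*⟪α,β⟫))*hGr'
  have hEGsum : -3 ≤ E + G := by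
    by_contra hcon
    push_neg at hcon
    have h4 : (4:ℝ) - (A:ℝ)*(E:ℝ) - (A:ℝ)*(G:ℝ) ≤ 0 := by
      have : ((E:ℝ) + (G:ℝ)) ≤ -4 := by
        have : ((E + G : ℤ):ℝ) ≤ ((-4 : ℤ):ℝ) := by exact_mod_cast (by omega : E + G ≤ -4)
        push_cast at this; linarith
      have hAc : (A:ℝ) = -1 := by exact_mod_cast hAm1
      rw [hAc]; linarith
    nlinarith [hpos, hval, mul_pos (mul_pos (mul_pos (mul_pos hr₁ hr₁) hr₂) hr₃) hr₃]
  have hEGcase : (E = -1 ∧ G = -2) ∨ (E = -2 ∧ G = -1) := by omega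
  -- assemble conclusion
  have hAc : pairR α β = -1 := by rw [hA, hAm1]; norm_num
  have hBc : pairR (s α) β = -1 := by
    rw [hB, ← hAB, hAm1]; norm_num
  have hsaα : pairR (s α) α = 0 := by
    unfold pairR
    rw [real_inner_comm α (s α), ho1]
    simp
  have hset : ({α, β, s α, s β} : Set V) = {α, β, s α} := by
    rw [hsb]
    ext x
    simp only [Set.mem_insert_iff, Set.mem_singleton_iff]
    tauto
  constructor
  · rw [hset]
    exact Set.ncard_eq_three.mpr ⟨α, β, s α, hne, Ne.symm hsa, hba, rfl⟩
  rcases hEGcase with ⟨hE2, hG2⟩ | ⟨hE2, hG2⟩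
  · refine ⟨α, β, s α, hset, hne, Ne.symm hsa, hba, rfl, hinv α hα, hsb, hAc, hBc, ?_, ?_, hp0, hsaα⟩
    · rw [hE, hE2]; norm_num
    · rw [hG, hG2]; norm_num
  · refine ⟨s α, β, α, ?_, Ne.symm hba, hsa, Ne.symm hne, hinv α hα, rfl, hsb, hBc, hAc, ?_, ?_, hsaα, hp0⟩
    · rw [hset]
      ext x
      simp only [Set.mem_insert_iff, Set.mem_singleton_iff]
      tauto
    · rw [hG, hG2]; norm_num
    · rw [hE, hE2]; norm_num

set_option maxHeartbeats 1600000 in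
lemma case4 {Φ S : Set V} (hΦ : IsRootSystem Φ) (hS : IsBase Φ S)
    {s : V → V} (hfold : IsFolding S s) {α β : V} (hα : α ∈ S) (hβ : β ∈ S) (hne : α ≠ β)
    (hdiff : pairR α β ≠ pairR (s α) (s β) ∨ pairR β α ≠ pairR (s β) (s α))
    (hsa : s α ≠ α) (hsb : s β ≠ β) : False := by
  obtain ⟨hmapS, hinv, horth, heq2⟩ := hfold
  have hsaS := hmapS α hα
  have hsbS := hmapS β hβ
  have hsub := hS.1
  have hli := hS.2.1
  have h0 := hΦ.2.1
  have hint := hΦ.2.2.2.1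
  have hne0 : ∀ x ∈ S, x ≠ 0 := fun x hx h => h0 (h ▸ hsub hx)
  have hr₁ : 0 < ⟪α, α⟫ := inner_self_pos' (hne0 α hα)
  have hr₂ : 0 < ⟪β, β⟫ := inner_self_pos' (hne0 β hβ)
  have hr₃ : 0 < ⟪s α, s α⟫ := inner_self_pos' (hne0 _ hsaS)
  have hr₄ : 0 < ⟪s β, s β⟫ := inner_self_pos' (hne0 _ hsbS)
  have ho1 : ⟪α, s α⟫ = 0 := pairR_zero_inner hr₃ (horth α hα hsa)
  -- subcase s α = β
  by_cases hab : s α = β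
  · have hba : s β = α := by rw [← hab, hinv α hα]
    have hiab : ⟪α, β⟫ = 0 := by rw [← hab]; exact ho1
    have h1 : pairR α β = 0 := by unfold pairR; rw [hiab]; simp
    have h2 : pairR β α = 0 := by unfold pairR; rw [real_inner_comm, hiab]; simp
    rcases hdiff with h | h <;> rw [hab, hba, h1, h2] at h <;> exact h rfl
  -- now all four distinct
  have hba : s β ≠ α := fun h => hab (by rw [← h, hinv β hβ])
  have hss : s α ≠ s β := fun h => hne (by rw [← hinv α hα, h, hinv β hβ])
  have ho2 : ⟪β, s β⟫ = 0 := pairR_zero_inner hr₄ (horth β hβ hsb)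
  -- integers
  obtain ⟨A, hA⟩ := hint β (hsub hβ) α (hsub hα)
  obtain ⟨E, hE⟩ := hint α (hsub hα) β (hsub hβ)
  obtain ⟨B, hB⟩ := hint β (hsub hβ) (s α) (hsub hsaS)
  obtain ⟨G, hG⟩ := hint (s α) (hsub hsaS) β (hsub hβ)
  obtain ⟨C, hC⟩ := hint (s β) (hsub hsbS) α (hsub hα)
  obtain ⟨F, hF⟩ := hint α (hsub hα) (s β) (hsub hsbS)
  obtain ⟨D, hD⟩ := hint (s β) (hsub hsbS) (s α) (hsub hsaS)
  obtain ⟨H, hH⟩ := hint (s α) (hsub hsaS) (s β) (hsub hsbS)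
  -- real relations
  have hAr : 2*⟪α, β⟫ = (A:ℝ)*⟪β, β⟫ := pairR_rel hr₂ hA
  have hEr : 2*⟪α, β⟫ = (E:ℝ)*⟪α, α⟫ := by
    have := pairR_rel hr₁ hE; rwa [real_inner_comm α β] at this
  have hBr : 2*⟪β, s α⟫ = (B:ℝ)*⟪β, β⟫ := by
    have := pairR_rel hr₂ hB; rwa [real_inner_comm β (s α)] at this
  have hGr : 2*⟪β, s α⟫ = (G:ℝ)*⟪s α, s α⟫ := pairR_rel hr₃ hG
  have hCr : 2*⟪α, s β⟫ = (C:ℝ)*⟪s β, s β⟫ := pairR_rel hr₄ hC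
  have hFr : 2*⟪α, s β⟫ = (F:ℝ)*⟪α, α⟫ := by
    have := pairR_rel hr₁ hF; rwa [real_inner_comm α (s β)] at this
  have hDr : 2*⟪s α, s β⟫ = (D:ℝ)*⟪s β, s β⟫ := pairR_rel hr₄ hD
  have hHr : 2*⟪s α, s β⟫ = (H:ℝ)*⟪s α, s α⟫ := by
    have := pairR_rel hr₃ hH; rwa [real_inner_comm (s α) (s β)] at this
  -- nonpositivity
  have nA : A ≤ 0 := int_nonpos_of hr₂ (base_inner_nonpos hΦ hS hα hβ hne) hAr
  have nE : E ≤ 0 := int_nonpos_of hr₁ (base_inner_nonpos hΦ hS hα hβ hne) hEr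
  have nB : B ≤ 0 := int_nonpos_of hr₂ (base_inner_nonpos hΦ hS hβ hsaS (Ne.symm hab)) hBr
  have nG : G ≤ 0 := int_nonpos_of hr₃ (base_inner_nonpos hΦ hS hβ hsaS (Ne.symm hab)) hGr
  have nC : C ≤ 0 := int_nonpos_of hr₄ (base_inner_nonpos hΦ hS hα hsbS (Ne.symm hba)) hCr
  have nF : F ≤ 0 := int_nonpos_of hr₁ (base_inner_nonpos hΦ hS hα hsbS (Ne.symm hba)) hFr
  have nD : D ≤ 0 := int_nonpos_of hr₄ (base_inner_nonpos hΦ hS hsaS hsbS hss) hDr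
  have nH : H ≤ 0 := int_nonpos_of hr₃ (base_inner_nonpos hΦ hS hsaS hsbS hss) hHr
  -- vanishing links
  have lAE := int_link hr₁ hAr hEr
  have lEA := int_link hr₂ hEr hAr
  have lBG := int_link hr₃ hBr hGr
  have lGB := int_link hr₂ hGr hBr
  have lCF := int_link hr₁ hCr hFr
  have lFC := int_link hr₄ hFr hCr
  have lDH := int_link hr₃ hDr hHr
  have lHD := int_link hr₄ hHr hDr
  -- folding equations
  have e1 : A - B + C - D = 0 := by
    have h1 := heq2 α hα β hβ
    rw [pairR_sub, pairR_sub, hA, hB, hC, hD] at h1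
    have h2 : ((A - B + C - D : ℤ) : ℝ) = 0 := by push_cast; linarith
    exact_mod_cast h2
  have e2 : E - F + G - H = 0 := by
    have h1 := heq2 β hβ α hα
    rw [pairR_sub, pairR_sub, hE, hF, hG, hH] at h1
    have h2 : ((E - F + G - H : ℤ) : ℝ) = 0 := by push_cast; linarith
    exact_mod_cast h2
  -- hdiff
  have hd : A ≠ D ∨ E ≠ H := by
    rcases hdiff with h | h
    · left; intro h'; apply h; rw [hA, hD]; exact_mod_cast h'
    · right; intro h'; apply h; rw [hE, hH]; exact_mod_cast h'
  -- integer bounds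
  have bAC : A + C ≤ -2 := by omega
  have bEG : E + G ≤ -2 := by omega
  have bBD : B + D ≤ -2 := by omega
  have bFH : F + H ≤ -2 := by omega
  -- witness vector
  have hx0 : (⟪β,β⟫*⟪s α,s α⟫*⟪s β,s β⟫) • α + (⟪α,α⟫*⟪s α,s α⟫*⟪s β,s β⟫) • β
      + (⟪α,α⟫*⟪β,β⟫*⟪s β,s β⟫) • (s α) + (⟪α,α⟫*⟪β,β⟫*⟪s α,s α⟫) • (s β) ≠ 0 := by
    intro h
    obtain ⟨h1, -, -, -⟩ := li4 hli hα hβ hsaS hsbS hne (Ne.symm hsa) (Ne.symm hba)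
      (Ne.symm hab) (Ne.symm hsb) hss h
    have : (0:ℝ) < ⟪β,β⟫*⟪s α,s α⟫*⟪s β,s β⟫ := by positivity
    rw [h1] at this
    exact lt_irrefl _ this
  have hpos := inner_self_pos' hx0
  have hval : 2*⟪(⟪β,β⟫*⟪s α,s α⟫*⟪s β,s β⟫) • α + (⟪α,α⟫*⟪s α,s α⟫*⟪s β,s β⟫) • β
      + (⟪α,α⟫*⟪β,β⟫*⟪s β,s β⟫) • (s α) + (⟪α,α⟫*⟪β,β⟫*⟪s α,s α⟫) • (s β),
      (⟪β,β⟫*⟪s α,s α⟫*⟪s β,s β⟫) • α + (⟪α,α⟫*⟪s α,s α⟫*⟪s β,s β⟫) • β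
      + (⟪α,α⟫*⟪β,β⟫*⟪s β,s β⟫) • (s α) + (⟪α,α⟫*⟪β,β⟫*⟪s α,s α⟫) • (s β)⟫
      = ⟪α,α⟫*⟪β,β⟫*⟪s α,s α⟫*⟪s β,s β⟫ *
        ( ⟪β,β⟫*⟪s α,s α⟫*⟪s β,s β⟫*(2+(A:ℝ)+(C:ℝ))
        + ⟪α,α⟫*⟪s α,s α⟫*⟪s β,s β⟫*(2+(E:ℝ)+(G:ℝ))
        + ⟪α,α⟫*⟪β,β⟫*⟪s β,s β⟫*(2+(B:ℝ)+(D:ℝ))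
        + ⟪α,α⟫*⟪β,β⟫*⟪s α,s α⟫*(2+(F:ℝ)+(H:ℝ)) ) := by
    simp only [inner_add_left, inner_add_right, real_inner_smul_left, real_inner_smul_right]
    rw [real_inner_comm α β, real_inner_comm α (s α), real_inner_comm α (s β),
        real_inner_comm β (s α), real_inner_comm β (s β), real_inner_comm (s α) (s β)]
    rw [ho1, ho2]
    linear_combination
      ((⟪β,β⟫*⟪s α,s α⟫*⟪s β,s β⟫)*(⟪α,α⟫*⟪s α,s α⟫*⟪s β,s β⟫))*hAr
      + ((⟪β,β⟫*⟪s α,s α⟫*⟪s β,s β⟫)*(⟪α,α⟫*⟪s α,s α⟫*⟪s β,s β⟫))*hEr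
      + ((⟪α,α⟫*⟪s α,s α⟫*⟪s β,s β⟫)*(⟪α,α⟫*⟪β,β⟫*⟪s β,s β⟫))*hBr
      + ((⟪α,α⟫*⟪s α,s α⟫*⟪s β,s β⟫)*(⟪α,α⟫*⟪β,β⟫*⟪s β,s β⟫))*hGr
      + ((⟪β,β⟫*⟪s α,s α⟫*⟪s β,s β⟫)*(⟪α,α⟫*⟪β,β⟫*⟪s α,s α⟫))*hCr
      + ((⟪β,β⟫*⟪s α,s α⟫*⟪s β,s β⟫)*(⟪α,α⟫*⟪β,β⟫*⟪s α,s α⟫))*hFr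
      + ((⟪α,α⟫*⟪β,β⟫*⟪s β,s β⟫)*(⟪α,α⟫*⟪β,β⟫*⟪s α,s α⟫))*hDr
      + ((⟪α,α⟫*⟪β,β⟫*⟪s β,s β⟫)*(⟪α,α⟫*⟪β,β⟫*⟪s α,s α⟫))*hHr
  -- conclude
  have c1 : (2+(A:ℝ)+(C:ℝ)) ≤ 0 := by
    have : ((A + C : ℤ) : ℝ) ≤ -2 := by exact_mod_cast bAC
    push_cast at this; linarith
  have c2 : (2+(E:ℝ)+(G:ℝ)) ≤ 0 := by
    have : ((E + G : ℤ) : ℝ) ≤ -2 := by exact_mod_cast bEG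
    push_cast at this; linarith
  have c3 : (2+(B:ℝ)+(D:ℝ)) ≤ 0 := by
    have : ((B + D : ℤ) : ℝ) ≤ -2 := by exact_mod_cast bBD
    push_cast at this; linarith
  have c4 : (2+(F:ℝ)+(H:ℝ)) ≤ 0 := by
    have : ((F + H : ℤ) : ℝ) ≤ -2 := by exact_mod_cast bFH
    push_cast at this; linarith
  have hb1 : (0:ℝ) < ⟪β,β⟫*⟪s α,s α⟫*⟪s β,s β⟫ := by positivity
  have hb2 : (0:ℝ) < ⟪α,α⟫*⟪s α,s α⟫*⟪s β,s β⟫ := by positivity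
  have hb3 : (0:ℝ) < ⟪α,α⟫*⟪β,β⟫*⟪s β,s β⟫ := by positivity
  have hb4 : (0:ℝ) < ⟪α,α⟫*⟪β,β⟫*⟪s α,s α⟫ := by positivity
  have hb0 : (0:ℝ) < ⟪α,α⟫*⟪β,β⟫*⟪s α,s α⟫*⟪s β,s β⟫ := by positivity
  nlinarith [mul_nonpos_of_nonneg_of_nonpos hb1.le c1, mul_nonpos_of_nonneg_of_nonpos hb2.le c2,
    mul_nonpos_of_nonneg_of_nonpos hb3.le c3, mul_nonpos_of_nonneg_of_nonpos hb4.le c4,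
    mul_pos hb0 hpos]

theorem stmt5 {V : Type*} [NormedAddCommGroup V] [InnerProductSpace ℝ V]
    [FiniteDimensional ℝ V] (Φ S : Set V)
    (hΦ : IsRootSystem Φ) (hS : IsBase Φ S)
    (s : V → V) (hfold : IsFolding S s)
    (α β : V) (hα : α ∈ S) (hβ : β ∈ S) (hne : α ≠ β)
    (hdiff : pairR α β ≠ pairR (s α) (s β) ∨ pairR β α ≠ pairR (s β) (s α)) :
    ({α, β, s α, s β} : Set V).ncard = 3 ∧
    ∃ γ₁ γ₂ γ₃ : V,
      ({α, β, s α, s β} : Set V) = {γ₁, γ₂, γ₃} ∧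
      γ₁ ≠ γ₂ ∧ γ₁ ≠ γ₃ ∧ γ₂ ≠ γ₃ ∧
      s γ₁ = γ₃ ∧ s γ₃ = γ₁ ∧ s γ₂ = γ₂ ∧
      pairR γ₁ γ₂ = -1 ∧ pairR γ₃ γ₂ = -1 ∧ pairR γ₂ γ₁ = -1 ∧ pairR γ₂ γ₃ = -2 ∧
      pairR γ₁ γ₃ = 0 ∧ pairR γ₃ γ₁ = 0 := by
  obtain ⟨hmapS, hinv, horth, heq2⟩ := hfold
  by_cases hsa : s α = α
  · by_cases hsb : s β = β
    · rw [hsa, hsb] at hdiff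
      rcases hdiff with h | h <;> exact absurd rfl h
    · have hset : ({α, β, s α, s β} : Set V) = {β, α, s β, s α} := by
        ext x
        simp only [Set.mem_insert_iff, Set.mem_singleton_iff]
        tauto
      rw [hset]
      exact case2 hΦ hS ⟨hmapS, hinv, horth, heq2⟩ hβ hα (Ne.symm hne) (Or.symm hdiff) hsb hsa
  · by_cases hsb : s β = β
    · exact case2 hΦ hS ⟨hmapS, hinv, horth, heq2⟩ hα hβ hne hdiff hsa hsb
    · exact absurd (case4 hΦ hS ⟨hmapS, hinv, horth, heq2⟩ hα hβ hne hdiff hsa hsb) not_false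
end

section
/- Let Φ be a finite reduced crystallographic root system with base S in a finite-dimensional real inner product space, let Sᵖ ⊆ S, let Φᵖ := Φ ∩ ℤSᵖ, and let ρ and ρᵖ be the half-sums of the positive roots of Φ and of Φᵖ respectively (positivity taken with respect to S). Then for every root α ∈ Φ, if ⟨ρ − ρᵖ | α∨⟩ = 0 then α ∈ Φᵖ. -/
open RealInnerProductSpace

variable {V : Type*} [NormedAddCommGroup V] [InnerProductSpace ℝ V]

/-- The half-sum of the elements of `Φ` that are positive with respect to `S`. -/
noncomputable def halfSumPos (Φ S : Set V) : V :=
  (2⁻¹ : ℝ) • ∑ᶠ α ∈ {α ∈ Φ | IsPositive S α}, α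

/-! ### auxiliary lemmas -/

lemma inner_self_ne (v : V) (hv : v ≠ 0) : ⟪v, v⟫ ≠ 0 :=
  inner_self_ne_zero.mpr hv

lemma inner_self_pos'_s11 (v : V) (hv : v ≠ 0) : 0 < ⟪v, v⟫ :=
  lt_of_le_of_ne real_inner_self_nonneg (Ne.symm (inner_self_ne v hv))

lemma reflV_self (v : V) (hv : v ≠ 0) : reflV v v = -v := by
  rw [reflV, pairR_self v hv]; module

lemma pairR_add (x y v : V) : pairR (x + y) v = pairR x v + pairR y v := by
  unfold pairR; rw [inner_add_left]; ring

lemma pairR_smul (c : ℝ) (x v : V) : pairR (c • x) v = c * pairR x v := by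
  unfold pairR; rw [real_inner_smul_left]; ring

lemma pairR_reflV (v : V) (hv : v ≠ 0) (x : V) :
    pairR (reflV v x) v = - pairR x v := by
  rw [reflV, pairR_sub, pairR_smul, pairR_self v hv]; ring

lemma reflV_involutive (v : V) (hv : v ≠ 0) (x : V) :
    reflV v (reflV v x) = x := by
  conv_lhs => rw [reflV, pairR_reflV v hv]
  rw [reflV]; module

/-- uniqueness of real coefficients over the linearly independent set `S` -/
lemma coeff_unique {S : Set V} (hLI : LinearIndependent ℝ ((↑) : S → V))
    (f g : V →₀ ℝ) (hf : (↑f.support : Set V) ⊆ S) (hg : (↑g.support : Set V) ⊆ S)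
    (h : f.sum (fun v r => r • v) = g.sum (fun v r => r • v)) : f = g := by
  classical
  have hfg : f - g = 0 := by
    apply (linearIndepOn_iff.mp (linearIndependent_subtype_iff.mp hLI))
    · rw [Finsupp.mem_supported]
      exact Set.Subset.trans (by exact_mod_cast Finsupp.support_sub) (by
        intro x hx
        rcases Finset.mem_union.mp (by exact_mod_cast hx) with h1 | h1
        · exact hf h1
        · exact hg h1)
    · rw [map_sub, sub_eq_zero]
      rw [Finsupp.linearCombination_apply, Finsupp.linearCombination_apply]
      simpa using h
  exact sub_eq_zero.mp hfg

noncomputable def toR (c : V →₀ ℤ) : V →₀ ℝ := c.mapRange Int.cast Int.cast_zero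

lemma toR_apply (c : V →₀ ℤ) (v : V) : toR c v = (c v : ℝ) := Finsupp.mapRange_apply

lemma toR_support (c : V →₀ ℤ) : (toR c).support ⊆ c.support := Finsupp.support_mapRange

lemma toR_sum (c : V →₀ ℤ) :
    (toR c).sum (fun v r => r • v) = c.sum (fun v n => (n : ℝ) • v) := by
  unfold toR
  exact Finsupp.sum_mapRange_index (fun a => by simp)

/-- distinct simple roots make obtuse angles -/
lemma obtuse {Φ S : Set V} (hΦ : IsRootSystem Φ) (hS : IsBase Φ S)
    {s t : V} (hs : s ∈ S) (ht : t ∈ S) (hst : s ≠ t) : ⟪s, t⟫ ≤ 0 := by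
  classical
  obtain ⟨hfin, h0, hrefl, hcart, hred⟩ := hΦ
  obtain ⟨hSΦ, hLI, hspan, hbase⟩ := hS
  by_contra hpos
  push_neg at hpos
  have ht0 : t ≠ 0 := fun h => h0 (h ▸ hSΦ ht)
  obtain ⟨n, hn⟩ := hcart t (hSΦ ht) s (hSΦ hs)
  have hnpos : 0 < (n : ℝ) := by
    rw [← hn]
    unfold pairR
    exact div_pos (by linarith) (inner_self_pos'_s11 t ht0)
  have hγ : reflV t s ∈ Φ := hrefl t (hSΦ ht) s (hSΦ hs)
  obtain ⟨c, hcsupp, hcsum, hcsign⟩ := hbase _ hγ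
  -- reflV t s = s - n • t
  have hγeq : reflV t s = (Finsupp.single s (1 : ℝ) + Finsupp.single t (-(n : ℝ))).sum
      (fun v r => r • v) := by
    rw [Finsupp.sum_add_index' (fun a => by simp) (fun a b₁ b₂ => add_smul b₁ b₂ a)]
    rw [Finsupp.sum_single_index (by simp), Finsupp.sum_single_index (by simp)]
    rw [reflV, hn]
    simp [sub_eq_add_neg, neg_smul]
  have huniq : toR c = Finsupp.single s (1 : ℝ) + Finsupp.single t (-(n : ℝ)) := by
    apply coeff_unique hLI
    · exact Set.Subset.trans (by exact_mod_cast toR_support c) hcsupp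
    · intro x hx
      rcases Finset.mem_union.mp (Finsupp.support_add (Finset.mem_coe.mp hx)) with h1 | h1
      · have := Finsupp.support_single_subset h1
        simp at this; exact this ▸ hs
      · have := Finsupp.support_single_subset h1
        simp at this; exact this ▸ ht
    · rw [toR_sum, ← hcsum, hγeq]
  have hcs : (c s : ℝ) = 1 := by
    have := congrArg (fun f => f s) huniq
    simpa [toR_apply, Finsupp.single_apply, hst, Ne.symm hst] using this
  have hct : (c t : ℝ) = -(n : ℝ) := by
    have := congrArg (fun f => f t) huniq
    simpa [toR_apply, Finsupp.single_apply, hst, Ne.symm hst] using this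
  rcases hcsign with hsign | hsign
  · have : (0:ℝ) ≤ (c t : ℝ) := by exact_mod_cast hsign t
    rw [hct] at this; linarith
  · have : (c s : ℝ) ≤ 0 := by exact_mod_cast hsign s
    rw [hcs] at this; linarith

/-- a simple root is positive -/
lemma simple_isPositive {S : Set V} {s : V} (hs : s ∈ S) : IsPositive S s := by
  refine ⟨Finsupp.single s 1, ?_, ?_, ?_⟩
  · intro x hx
    have := Finsupp.support_single_subset (Finset.mem_coe.mp hx)
    simp at this; exact this ▸ hs
  · rw [Finsupp.sum_single_index (by simp)]; simp
  · intro v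
    rcases eq_or_ne v s with h | h
    · simp [h, Finsupp.single_apply]
    · simp [Finsupp.single_apply, Ne.symm h]

/-- key combinatorial lemma: reflecting a positive root other than `s` in the simple
root `s` yields a positive root other than `s`. -/
lemma reflV_pos {Φ S : Set V} (hΦ : IsRootSystem Φ) (hS : IsBase Φ S)
    {s β : V} (hs : s ∈ S) (hβΦ : β ∈ Φ) (hβpos : IsPositive S β) (hβs : β ≠ s) :
    reflV s β ∈ Φ ∧ IsPositive S (reflV s β) ∧ reflV s β ≠ s := by
  classical
  obtain ⟨hfin, h0, hrefl, hcart, hred⟩ := hΦ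
  obtain ⟨hSΦ, hLI, hspan, hbase⟩ := hS
  have hs0 : s ≠ 0 := fun h => h0 (h ▸ hSΦ hs)
  have hβ0 : β ≠ 0 := fun h => h0 (h ▸ hβΦ)
  have hγΦ : reflV s β ∈ Φ := hrefl s (hSΦ hs) β hβΦ
  obtain ⟨n, hn⟩ := hcart s (hSΦ hs) β hβΦ
  obtain ⟨c, hcsupp, hcsum, hcpos⟩ := hβpos
  -- find v ≠ s in the support of c with c v > 0
  have hv : ∃ v ∈ c.support, v ≠ s := by
    by_contra hcon
    push_neg at hcon
    have hβeq : β = (c s : ℝ) • s := by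
      rw [hcsum, Finsupp.sum]
      rcases Finset.subset_singleton_iff.mp (fun x hx => Finset.mem_singleton.mpr (hcon x hx))
        with h | h
      · rw [h]; simp
        exact absurd (by rw [hcsum, Finsupp.sum, h]; simp) hβ0
      · rw [h, Finset.sum_singleton]
    have : (c s : ℝ) • s ∈ Φ := hβeq ▸ hβΦ
    rcases hred s (hSΦ hs) _ this with h | h
    · exact hβs (by rw [hβeq, h])
    · have : ((c s : ℝ) + 1) • s = 0 := by
        rw [add_smul, h]; simp
      rcases smul_eq_zero.mp this with h1 | h1
      · have : (c s : ℝ) = -1 := by linarith [h1]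
        have hnn : (0:ℝ) ≤ (c s : ℝ) := by exact_mod_cast hcpos s
        rw [this] at hnn; linarith
      · exact hs0 h1
  obtain ⟨v, hvsupp, hvs⟩ := hv
  have hcv : 0 < (c v : ℝ) := by
    have h1 := hcpos v
    have h2 : c v ≠ 0 := Finsupp.mem_support_iff.mp hvsupp
    exact_mod_cast lt_of_le_of_ne h1 (Ne.symm h2)
  -- the real expansion of reflV s β
  set f : V →₀ ℝ := toR c + Finsupp.single s (-(n : ℝ)) with hf
  have hfsupp : (↑f.support : Set V) ⊆ S := by
    intro x hx
    rcases Finset.mem_union.mp (Finsupp.support_add (Finset.mem_coe.mp hx)) with h1 | h1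
    · exact hcsupp (toR_support c h1)
    · have := Finsupp.support_single_subset h1
      simp at this; exact this ▸ hs
  have hfsum : reflV s β = f.sum (fun v r => r • v) := by
    rw [hf, Finsupp.sum_add_index' (fun a => by simp) (fun a b₁ b₂ => add_smul b₁ b₂ a)]
    rw [toR_sum, Finsupp.sum_single_index (by simp), ← hcsum, reflV, hn]
    simp [sub_eq_add_neg, neg_smul]
  have hfv : f v = (c v : ℝ) := by
    rw [hf]; simp [toR_apply, Finsupp.single_apply, Ne.symm hvs]
  -- reflV s β ≠ s
  have hne : reflV s β ≠ s := by
    intro heq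
    have hseq : s = (Finsupp.single s (1 : ℝ)).sum (fun v r => r • v) := by
      rw [Finsupp.sum_single_index (by simp)]; simp
    have := coeff_unique hLI f (Finsupp.single s 1) hfsupp
      (by intro x hx
          have := Finsupp.support_single_subset (Finset.mem_coe.mp hx)
          simp at this; exact this ▸ hs)
      (by rw [← hfsum, heq, ← hseq])
    have := congrArg (fun g => g v) this
    simp only [hfv] at this
    rw [Finsupp.single_apply] at this
    simp [Ne.symm hvs] at this
    simp [this] at hcv
  -- positivity
  obtain ⟨d, hdsupp, hdsum, hdsign⟩ := hbase _ hγΦ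
  have hfd : f = toR d := by
    apply coeff_unique hLI f (toR d) hfsupp
      (Set.Subset.trans (by exact_mod_cast toR_support d) hdsupp)
    rw [← hfsum, toR_sum, ← hdsum]
  have hdv : 0 < (d v : ℝ) := by
    have := congrArg (fun g => g v) hfd
    simp only [hfv, toR_apply] at this
    linarith [hcv, this]
  have hdpos : ∀ w, 0 ≤ d w := by
    rcases hdsign with h | h
    · exact h
    · exfalso
      have : (d v : ℝ) ≤ 0 := by exact_mod_cast h v
      linarith
  exact ⟨hγΦ, ⟨d, hdsupp, hdsum, hdpos⟩, hne⟩

/-- the reflection in `s` fixes the sum over a finite set stable under it except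
for sending `s` to `-s`; hence the pairing of the sum against `s` is `2`. -/
lemma pairR_sum_eq_two (T : Finset V) (s : V) (hs0 : s ≠ 0) (hsT : s ∈ T)
    (hcl : ∀ β ∈ T, β ≠ s → reflV s β ∈ T ∧ reflV s β ≠ s) :
    pairR (∑ β ∈ T, β) s = 2 := by
  classical
  have hss := inner_self_ne s hs0
  have h1 : ∑ β ∈ T, reflV s β = (∑ β ∈ T, β) - (∑ β ∈ T, pairR β s) • s := by
    simp only [reflV, Finset.sum_sub_distrib, ← Finset.sum_smul]
  have h2 : ∑ β ∈ T, reflV s β = (∑ β ∈ T, β) - (2 : ℝ) • s := by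
    rw [← Finset.add_sum_erase _ _ hsT, ← Finset.add_sum_erase _ (fun β => β) hsT,
      reflV_self s hs0]
    have : ∑ β ∈ T.erase s, reflV s β = ∑ β ∈ T.erase s, β := by
      apply Finset.sum_nbij' (fun β => reflV s β) (fun β => reflV s β)
      · intro a ha
        obtain ⟨h1, h2⟩ := hcl a (Finset.mem_of_mem_erase ha) (Finset.ne_of_mem_erase ha)
        exact Finset.mem_erase.mpr ⟨h2, h1⟩
      · intro a ha
        obtain ⟨h1, h2⟩ := hcl a (Finset.mem_of_mem_erase ha) (Finset.ne_of_mem_erase ha)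
        exact Finset.mem_erase.mpr ⟨h2, h1⟩
      · intro a _; exact reflV_involutive s hs0 a
      · intro a _; exact reflV_involutive s hs0 a
      · intro a _; rfl
    rw [this]
    rw [two_smul]
    abel
  have h7 : (∑ β ∈ T, β) - (∑ β ∈ T, pairR β s) • s - ((∑ β ∈ T, β) - (2:ℝ) • s) = 0 := by
    rw [h1.symm.trans h2]; simp
  have h8 : ((2:ℝ) - ∑ β ∈ T, pairR β s) • s = 0 := by
    rw [sub_smul, ← h7]; abel
  have h5 : (∑ β ∈ T, pairR β s) = 2 := by
    rcases smul_eq_zero.mp h8 with h | h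
    · exact (sub_eq_zero.mp h).symm
    · exact absurd h hs0
  rw [← h5]
  unfold pairR
  rw [sum_inner, Finset.mul_sum, Finset.sum_div]

/-- pairing of the half sum of positives of a suitable subset against a simple root -/
lemma inner_halfSumPos {Φ S : Set V} (hΦ : IsRootSystem Φ) (hS : IsBase Φ S)
    (Ψ : Set V) (hΨΦ : Ψ ⊆ Φ) {s : V} (hs : s ∈ S) (hsΨ : s ∈ Ψ)
    (hcl : ∀ β ∈ Ψ, IsPositive S β → β ≠ s → reflV s β ∈ Ψ) :
    ⟪halfSumPos Ψ S, s⟫ = ⟪s, s⟫ / 2 := by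
  classical
  have hs0 : s ≠ 0 := fun h => hΦ.2.1 (h ▸ hΨΦ hsΨ)
  have hfin : {α ∈ Ψ | IsPositive S α}.Finite := hΦ.1.subset (fun x hx => hΨΦ hx.1)
  have hp : pairR ((2⁻¹ : ℝ) • ∑ β ∈ hfin.toFinset, β) s = 1 := by
    rw [pairR_smul]
    rw [pairR_sum_eq_two hfin.toFinset s hs0
      (hfin.mem_toFinset.mpr ⟨hsΨ, simple_isPositive hs⟩) ?_]
    · norm_num
    · intro β hβ hβs
      rw [hfin.mem_toFinset] at hβ
      obtain ⟨h1, h2, h3⟩ := reflV_pos hΦ hS hs (hΨΦ hβ.1) hβ.2 hβs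
      exact ⟨hfin.mem_toFinset.mpr ⟨hcl β hβ.1 hβ.2 hβs, h2⟩, h3⟩
  rw [halfSumPos, finsum_mem_eq_finite_toFinset_sum _ hfin]
  unfold pairR at hp
  rw [real_inner_smul_left] at hp ⊢
  have := inner_self_ne s hs0
  field_simp at hp
  linarith

/-- the half sum of positives of the subsystem pairs nonpositively against a
simple root outside `Sp`. -/
lemma inner_halfSumPos_nonpos {Φ S Sp : Set V} (hΦ : IsRootSystem Φ) (hS : IsBase Φ S)
    (hSp : Sp ⊆ S) {s : V} (hs : s ∈ S) (hsp : s ∉ Sp) :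
    ⟪halfSumPos (Φ ∩ (Submodule.span ℤ Sp : Set V)) S, s⟫ ≤ 0 := by
  classical
  have hfin : {α ∈ Φ ∩ (Submodule.span ℤ Sp : Set V) | IsPositive S α}.Finite :=
    hΦ.1.subset (fun x hx => hx.1.1)
  rw [halfSumPos, finsum_mem_eq_finite_toFinset_sum _ hfin, real_inner_smul_left, sum_inner]
  have hsum : ∑ β ∈ hfin.toFinset, ⟪β, s⟫ ≤ 0 := by
    apply Finset.sum_nonpos
    intro β hβ
    rw [hfin.mem_toFinset] at hβ
    obtain ⟨⟨hβΦ, hβspan⟩, hβpos⟩ := hβ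
    obtain ⟨d, hdsupp, hdsum⟩ := Submodule.mem_span_set.mp hβspan
    have hdsum' : β = d.sum (fun v n => (n : ℝ) • v) := by
      rw [← hdsum]
      exact Finsupp.sum_congr (fun v _ => (Int.cast_smul_eq_zsmul ℝ (d v) v).symm)
    obtain ⟨c, hcsupp, hcsum, hcpos⟩ := hβpos
    have hdc : toR d = toR c := by
      apply coeff_unique hS.2.1
      · exact Set.Subset.trans (by exact_mod_cast toR_support d) (Set.Subset.trans hdsupp hSp)
      · exact Set.Subset.trans (by exact_mod_cast toR_support c) hcsupp
      · rw [toR_sum, toR_sum, ← hdsum', ← hcsum]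
    have hdpos : ∀ w, 0 ≤ (d w : ℝ) := by
      intro w
      have := congrArg (fun g => g w) hdc
      simp only [toR_apply] at this
      rw [this]
      exact_mod_cast hcpos w
    rw [hdsum', Finsupp.sum, sum_inner]
    apply Finset.sum_nonpos
    intro v hv
    rw [real_inner_smul_left]
    have hvSp : v ∈ Sp := hdsupp hv
    have hvs : v ≠ s := fun h => hsp (h ▸ hvSp)
    exact mul_nonpos_of_nonneg_of_nonpos (hdpos v) (obtuse hΦ hS (hSp hvSp) hs hvs)
  linarith

/-- with `Φᵖ = Φ ∩ ℤSᵖ`, `ρ` and `ρᵖ` the half-sums of positive roots of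
`Φ` and `Φᵖ`, every root `α ∈ Φ` with `⟨ρ - ρᵖ | α∨⟩ = 0` lies in `Φᵖ`. -/
theorem stmt11 {V : Type*} [NormedAddCommGroup V] [InnerProductSpace ℝ V]
    [FiniteDimensional ℝ V] (Φ S Sp : Set V)
    (hΦ : IsRootSystem Φ) (hS : IsBase Φ S) (hSp : Sp ⊆ S) :
    ∀ α ∈ Φ,
      pairR (halfSumPos Φ S - halfSumPos (Φ ∩ (Submodule.span ℤ Sp : Set V)) S) α = 0 →
      α ∈ Φ ∩ (Submodule.span ℤ Sp : Set V) := by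
  classical
  intro α hαΦ hpair
  set ρ := halfSumPos Φ S with hρ
  set ρp := halfSumPos (Φ ∩ (Submodule.span ℤ Sp : Set V)) S with hρp
  have hα0 : α ≠ 0 := fun h => hΦ.2.1 (h ▸ hαΦ)
  have hinner : ⟪ρ - ρp, α⟫ = 0 := by
    unfold pairR at hpair
    rcases div_eq_zero_iff.mp hpair with h | h
    · linarith
    · exact absurd h (inner_self_ne α hα0)
  -- values of ρ - ρp against simple roots
  have hΔ0 : ∀ v ∈ Sp, ⟪ρ - ρp, v⟫ = 0 := by
    intro v hv
    have h1 : ⟪ρ, v⟫ = ⟪v, v⟫ / 2 :=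
      inner_halfSumPos hΦ hS Φ (le_refl _) (hSp hv) (hS.1 (hSp hv))
        (fun β hβ _ hβs => hΦ.2.2.1 v (hS.1 (hSp hv)) β hβ)
    have h2 : ⟪ρp, v⟫ = ⟪v, v⟫ / 2 := by
      apply inner_halfSumPos hΦ hS _ (Set.inter_subset_left) (hSp hv)
        ⟨hS.1 (hSp hv), Submodule.subset_span hv⟩
      intro β hβ _ hβs
      refine ⟨hΦ.2.2.1 v (hS.1 (hSp hv)) β hβ.1, ?_⟩
      obtain ⟨n, hn⟩ := hΦ.2.2.2.1 v (hS.1 (hSp hv)) β hβ.1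
      rw [reflV, hn, Int.cast_smul_eq_zsmul]
      exact Submodule.sub_mem _ hβ.2 (Submodule.smul_mem _ n (Submodule.subset_span hv))
    rw [inner_sub_left, h1, h2, sub_self]
  have hΔpos : ∀ v ∈ S, v ∉ Sp → 0 < ⟪ρ - ρp, v⟫ := by
    intro v hv hvp
    have h1 : ⟪ρ, v⟫ = ⟪v, v⟫ / 2 :=
      inner_halfSumPos hΦ hS Φ (le_refl _) hv (hS.1 hv)
        (fun β hβ _ hβs => hΦ.2.2.1 v (hS.1 hv) β hβ)
    have h2 : ⟪ρp, v⟫ ≤ 0 := inner_halfSumPos_nonpos hΦ hS hSp hv hvp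
    have hv0 : v ≠ 0 := fun h => hΦ.2.1 (h ▸ hS.1 hv)
    have := inner_self_pos'_s11 v hv0
    rw [inner_sub_left, h1]
    linarith
  have hΔnonneg : ∀ v ∈ S, 0 ≤ ⟪ρ - ρp, v⟫ := by
    intro v hv
    by_cases hvp : v ∈ Sp
    · exact le_of_eq (hΔ0 v hvp).symm
    · exact le_of_lt (hΔpos v hv hvp)
  -- expansion of α
  obtain ⟨c, hcsupp, hcsum, hcsign⟩ := hS.2.2.2 α hαΦ
  have hexp : ⟪ρ - ρp, α⟫ = ∑ v ∈ c.support, (c v : ℝ) * ⟪ρ - ρp, v⟫ := by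
    rw [hcsum, Finsupp.sum, inner_sum]
    exact Finset.sum_congr rfl (fun v _ => real_inner_smul_right _ _ _)
  have hsuppSp : (↑c.support : Set V) ⊆ Sp := by
    intro v hv
    have hvsupp : v ∈ c.support := Finset.mem_coe.mp hv
    have hvS : v ∈ S := hcsupp hv
    by_contra hvp
    have hΔv := hΔpos v hvS hvp
    have hcv : c v ≠ 0 := Finsupp.mem_support_iff.mp hvsupp
    rcases hcsign with hsign | hsign
    · have hterm : ∀ w ∈ c.support, 0 ≤ (c w : ℝ) * ⟪ρ - ρp, w⟫ := fun w hw =>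
        mul_nonneg (by exact_mod_cast hsign w) (hΔnonneg w (hcsupp (Finset.mem_coe.mpr hw)))
      have := (Finset.sum_eq_zero_iff_of_nonneg hterm).mp (by rw [← hexp, hinner]) v hvsupp
      rcases mul_eq_zero.mp this with h | h
      · exact hcv (by exact_mod_cast h)
      · linarith
    · have hterm : ∀ w ∈ c.support, (c w : ℝ) * ⟪ρ - ρp, w⟫ ≤ 0 := fun w hw =>
        mul_nonpos_of_nonpos_of_nonneg (by exact_mod_cast hsign w)
          (hΔnonneg w (hcsupp (Finset.mem_coe.mpr hw)))
      have := (Finset.sum_eq_zero_iff_of_nonpos hterm).mp (by rw [← hexp, hinner]) v hvsupp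
      rcases mul_eq_zero.mp this with h | h
      · exact hcv (by exact_mod_cast h)
      · linarith
  refine ⟨hαΦ, ?_⟩
  rw [hcsum, Finsupp.sum]
  apply Submodule.sum_mem
  intro v hv
  rw [Int.cast_smul_eq_zsmul]
  exact Submodule.smul_mem _ _ (Submodule.subset_span (hsuppSp (Finset.mem_coe.mpr hv)))
end
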